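/- arXiv:1312.4306 — 2 statements merged into one kernel-verified Lean document; each statement's English description precedes it below -/
import Mathlib

section
/- Let K be a compact convex subset of ℝ² that is the intersection of finitely many closed half-planes, is bounded, and has nonempty interior (a polygon convexe, PC). Then there exists a CPD (A_k)_{k∈ℤ} with some period p ≥ 3 such that the boundary of K equals the union of the segments [A_k, A_{k+1}] for 0 ≤ k ≤ p-1. -/
noncomputable section

/-- Determinant of two vectors of the plane in the canonical basis. -/
def det2 (v w : ℝ × ℝ) : ℝ := v.1 * w.2 - v.2 * w.1

/-- Convex polygonal direct (CPD) with `n` vertices: an `n`-periodic sequence of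
points of the plane such that every vertex `A q`, `q ∈ [1, n-1] \ {p, p+1}`, is
strictly on the positive side of the oriented edge `(A p, A (p+1))`. -/
def IsCPD (n : ℕ) (A : ℤ → ℝ × ℝ) : Prop :=
  3 ≤ n ∧ (∀ k : ℤ, A (k + n) = A k) ∧
  ∀ p q : ℤ, 0 ≤ p → p ≤ (n : ℤ) - 1 → 1 ≤ q → q ≤ (n : ℤ) - 1 →
    q ≠ p → q ≠ p + 1 → 0 < det2 (A (p + 1) - A p) (A q - A p)

/-- First closed quadrant. -/
def Q1 (v : ℝ × ℝ) : Prop := 0 ≤ v.1 ∧ 0 ≤ v.2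
/-- Second closed quadrant. -/
def Q2 (v : ℝ × ℝ) : Prop := v.1 ≤ 0 ∧ 0 ≤ v.2
/-- Third closed quadrant. -/
def Q3 (v : ℝ × ℝ) : Prop := v.1 ≤ 0 ∧ v.2 ≤ 0
/-- Fourth closed quadrant. -/
def Q4 (v : ℝ × ℝ) : Prop := 0 ≤ v.1 ∧ v.2 ≤ 0

/-- Two vectors lie in the same closed quadrant. -/
def SameQuadrant (v w : ℝ × ℝ) : Prop :=
  (Q1 v ∧ Q1 w) ∨ (Q2 v ∧ Q2 w) ∨ (Q3 v ∧ Q3 w) ∨ (Q4 v ∧ Q4 w)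

/-- The unit square `[0,1]²`. -/
def unitSquare : Set (ℝ × ℝ) := Set.Icc ((0, 0) : ℝ × ℝ) (1, 1)

/-- Membership in the family `D_{m,n}` of Farey lines: lines meeting the unit
square with an integer equation `u x + v y = w`, `|u| ≤ m`, `|v| ≤ n`,
`(u, v) ≠ (0, 0)`. -/
def IsFareyLine (m n : ℕ) (L : Set (ℝ × ℝ)) : Prop :=
  (L ∩ unitSquare).Nonempty ∧
  ∃ u v w : ℤ, |u| ≤ (m : ℤ) ∧ |v| ≤ (n : ℤ) ∧ (u, v) ≠ (0, 0) ∧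
    L = {p : ℝ × ℝ | (u : ℝ) * p.1 + (v : ℝ) * p.2 = (w : ℝ)}

/-- The Farey complex `CF(m,n)`: the complement in the unit square of the union
of the lines of `D_{m,n}`. -/
def FareyComplex (m n : ℕ) : Set (ℝ × ℝ) :=
  {p ∈ unitSquare | ∀ L, IsFareyLine m n L → p ∉ L}

/-- The closed polygonal line associated with a `p`-periodic sequence of points. -/
def Polyline (p : ℕ) (A : ℤ → ℝ × ℝ) : Set (ℝ × ℝ) :=
  ⋃ k ∈ Finset.range p, segment ℝ (A k) (A (k + 1))

/-- A closed half-plane of the plane. -/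
def IsClosedHalfPlane (P : Set (ℝ × ℝ)) : Prop :=
  ∃ a b c : ℝ, (a, b) ≠ (0, 0) ∧ P = {p : ℝ × ℝ | a * p.1 + b * p.2 ≤ c}

/-- A convex polygon (PC): a bounded intersection of finitely many closed
half-planes with nonempty interior. -/
def IsPC (K : Set (ℝ × ℝ)) : Prop :=
  (∃ X : Set (Set (ℝ × ℝ)), X.Finite ∧ (∀ P ∈ X, IsClosedHalfPlane P) ∧
    K = ⋂₀ X) ∧
  Bornology.IsBounded K ∧ (interior K).Nonempty

namespace PCaux

def hh (v : ℝ × ℝ) : Prop := 0 < v.2 ∨ (v.2 = 0 ∧ 0 < v.1)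

def slt (v w : ℝ × ℝ) : Prop :=
  (hh v ∧ ¬ hh w) ∨ (hh v ∧ hh w ∧ 0 < det2 v w) ∨ (¬ hh v ∧ ¬ hh w ∧ 0 < det2 v w)

lemma detJ (u v x : ℝ × ℝ) : det2 u x * v.2 = det2 u v * x.2 + det2 v x * u.2 := by
  simp only [det2]; ring

lemma det2_anti (v w : ℝ × ℝ) : det2 v w = - det2 w v := by simp only [det2]; ring

lemma det2_zero_iff {v w : ℝ × ℝ} (hv : v ≠ 0) (h : det2 v w = 0) : ∃ t : ℝ, w = t • v := by
  simp only [det2] at h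
  rcases eq_or_ne v.1 0 with h1 | h1
  · have h2 : v.2 ≠ 0 := fun h2 => hv (Prod.ext h1 h2)
    refine ⟨w.2 / v.2, Prod.ext ?_ ?_⟩ <;> simp [Prod.smul_def] <;> field_simp <;> nlinarith
  · refine ⟨w.1 / v.1, Prod.ext ?_ ?_⟩ <;> simp [Prod.smul_def] <;> field_simp <;> nlinarith

lemma not_hh_iff {v : ℝ × ℝ} (hv : v ≠ 0) : ¬ hh v ↔ (v.2 < 0 ∨ (v.2 = 0 ∧ v.1 < 0)) := by
  have hv' : ¬ (v.1 = 0 ∧ v.2 = 0) := fun h => hv (Prod.ext h.1 h.2)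
  unfold hh; constructor
  · intro h; push_neg at h
    rcases lt_or_eq_of_le h.1 with h2 | h2
    · exact Or.inl h2
    · right; refine ⟨h2, ?_⟩
      rcases lt_or_eq_of_le (h.2 h2) with h1 | h1
      · exact h1
      · exact absurd ⟨h1, h2⟩ hv'
  · rintro (h2 | ⟨h2, h1⟩) <;> rintro (hu | ⟨hu2, hu1⟩) <;> linarith

lemma smul_fst (t : ℝ) (v : ℝ × ℝ) : (t • v).1 = t * v.1 := rfl
lemma smul_snd (t : ℝ) (v : ℝ × ℝ) : (t • v).2 = t * v.2 := rfl

lemma hh_smul_pos {v w : ℝ × ℝ} {t : ℝ} (hv : hh v) (hw : hh w) (h : w = t • v) : 0 < t := by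
  have h2 : w.2 = t * v.2 := by rw [h]; rfl
  have h1 : w.1 = t * v.1 := by rw [h]; rfl
  by_contra ht; push_neg at ht
  rcases hv with hv | ⟨hv2, hv1⟩ <;> rcases hw with hw | ⟨hw2, hw1⟩
  · nlinarith [mul_nonneg (neg_nonneg.2 ht) hv.le]
  · have e2 : t * v.2 = 0 := by rw [← h2, hw2]
    have e : w.1 * v.2 = (t * v.2) * v.1 := by rw [h1]; ring
    rw [e2, zero_mul] at e
    nlinarith [mul_pos hw1 hv]
  · nlinarith [mul_nonneg (neg_nonneg.2 ht) hv2.ge]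
  · nlinarith [mul_nonneg (neg_nonneg.2 ht) hv1.le]

lemma low_smul_pos {v w : ℝ × ℝ} {t : ℝ} (hv' : v ≠ 0) (hw' : w ≠ 0)
    (hv : ¬ hh v) (hw : ¬ hh w) (h : w = t • v) : 0 < t := by
  have h2 : w.2 = t * v.2 := by rw [h]; rfl
  have h1 : w.1 = t * v.1 := by rw [h]; rfl
  rw [not_hh_iff hv'] at hv; rw [not_hh_iff hw'] at hw
  by_contra ht; push_neg at ht
  rcases hv with hv | ⟨hv2, hv1⟩ <;> rcases hw with hw | ⟨hw2, hw1⟩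
  · nlinarith [mul_nonneg (neg_nonneg.2 ht) (neg_nonneg.2 hv.le)]
  · have e2 : t * v.2 = 0 := by rw [← h2, hw2]
    have e : w.1 * v.2 = (t * v.2) * v.1 := by rw [h1]; ring
    rw [e2, zero_mul] at e
    nlinarith [mul_pos_of_neg_of_neg hw1 hv]
  · nlinarith [mul_nonneg (neg_nonneg.2 ht) hv2.ge]
  · nlinarith [mul_nonneg (neg_nonneg.2 ht) (neg_nonneg.2 hv1.le)]

lemma slt_trichotomy {v w : ℝ × ℝ} (hv : v ≠ 0) (hw : w ≠ 0)
    (hpar : ∀ t : ℝ, 0 < t → w ≠ t • v) : slt v w ∨ slt w v := by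
  by_cases h1 : hh v <;> by_cases h2 : hh w
  · have hd : det2 v w ≠ 0 := by
      intro hd
      obtain ⟨t, ht⟩ := det2_zero_iff hv hd
      exact hpar t (hh_smul_pos h1 h2 ht) ht
    rcases hd.lt_or_gt with h | h
    · right; right; left; exact ⟨h2, h1, by have := det2_anti w v; linarith⟩
    · left; right; left; exact ⟨h1, h2, h⟩
  · left; left; exact ⟨h1, h2⟩
  · right; left; exact ⟨h2, h1⟩
  · have hd : det2 v w ≠ 0 := by
      intro hd
      obtain ⟨t, ht⟩ := det2_zero_iff hv hd
      exact hpar t (low_smul_pos hv hw h1 h2 ht) ht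
    rcases hd.lt_or_gt with h | h
    · right; right; right; exact ⟨h2, h1, by have := det2_anti w v; linarith⟩
    · left; right; right; exact ⟨h1, h2, h⟩

lemma slt_asymm {v w : ℝ × ℝ} (h : slt v w) : ¬ slt w v := by
  have := det2_anti v w
  rcases h with ⟨a, b⟩ | ⟨a, b, c⟩ | ⟨a, b, c⟩ <;>
    rintro (⟨a', b'⟩ | ⟨a', b', c'⟩ | ⟨a', b', c'⟩) <;>
      first | exact b a' | exact a' a | exact b' a | exact a b' | linarith

lemma det_trans_upper {u v w : ℝ × ℝ} (hu : hh u) (hv : hh v) (hw : hh w)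
    (h1 : 0 < det2 u v) (h2 : 0 < det2 v w) : 0 < det2 u w := by
  have J := detJ u v w
  simp only [det2] at h1 h2 J ⊢
  rcases hv with hv | ⟨hv2, hv1⟩
  · rcases hw with hw | ⟨hw2, hw1⟩
    · rcases hu with hu | ⟨hu2, hu1⟩ <;> nlinarith
    · exfalso; nlinarith [mul_pos hv hw1, mul_eq_zero_of_right v.1 hw2]
  · exfalso
    rcases hu with hu | ⟨hu2, hu1⟩
    · nlinarith [mul_pos hu hv1, mul_eq_zero_of_right u.1 hv2]
    · nlinarith [mul_eq_zero_of_right u.1 hv2]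

lemma det_trans_lower {u v w : ℝ × ℝ} (hu' : u ≠ 0) (hv' : v ≠ 0) (hw' : w ≠ 0)
    (hu : ¬ hh u) (hv : ¬ hh v) (hw : ¬ hh w)
    (h1 : 0 < det2 u v) (h2 : 0 < det2 v w) : 0 < det2 u w := by
  have J := detJ u v w
  rw [not_hh_iff hu'] at hu; rw [not_hh_iff hv'] at hv; rw [not_hh_iff hw'] at hw
  simp only [det2] at h1 h2 J ⊢
  rcases hv with hv | ⟨hv2, hv1⟩
  · rcases hw with hw | ⟨hw2, hw1⟩
    · rcases hu with hu | ⟨hu2, hu1⟩ <;> nlinarith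
    · exfalso; nlinarith [mul_pos_of_neg_of_neg hv hw1, mul_eq_zero_of_right v.1 hw2]
  · exfalso
    rcases hu with hu | ⟨hu2, hu1⟩
    · nlinarith [mul_pos_of_neg_of_neg hu hv1, mul_eq_zero_of_right u.1 hv2]
    · nlinarith [mul_eq_zero_of_right u.1 hv2]

lemma slt_trans {u v w : ℝ × ℝ} (hu : u ≠ 0) (hv : v ≠ 0) (hw : w ≠ 0)
    (h1 : slt u v) (h2 : slt v w) : slt u w := by
  rcases h1 with ⟨a, b⟩ | ⟨a, b, c⟩ | ⟨a, b, c⟩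
  · rcases h2 with ⟨a', b'⟩ | ⟨a', b', c'⟩ | ⟨a', b', c'⟩
    · exact absurd a' b
    · exact absurd a' b
    · left; exact ⟨a, b'⟩
  · rcases h2 with ⟨a', b'⟩ | ⟨a', b', c'⟩ | ⟨a', b', c'⟩
    · left; exact ⟨a, b'⟩
    · right; left; exact ⟨a, b', det_trans_upper a b b' c c'⟩
    · exact absurd b a'
  · rcases h2 with ⟨a', b'⟩ | ⟨a', b', c'⟩ | ⟨a', b', c'⟩
    · exact absurd a' b
    · exact absurd a' b
    · right; right; exact ⟨a, b', det_trans_lower hu hv hw a b b' c c'⟩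


variable {α : Type*} [DecidableEq α] (r : α → α → Prop)

lemma exists_least (S : Finset α)
    (trich : ∀ v ∈ S, ∀ w ∈ S, v ≠ w → r v w ∨ r w v)
    (trans : ∀ u ∈ S, ∀ v ∈ S, ∀ w ∈ S, r u v → r v w → r u w) :
    S.Nonempty → ∃ m ∈ S, ∀ x ∈ S, x ≠ m → r m x := by
  classical
  induction S using Finset.strongInduction with
  | _ S ih =>
    intro hS
    obtain ⟨a, ha⟩ := hS
    rcases (S.erase a).eq_empty_or_nonempty with he | he
    · refine ⟨a, ha, fun x hx hxa => absurd ?_ (Finset.notMem_empty x)⟩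
      rw [← he]; exact Finset.mem_erase.2 ⟨hxa, hx⟩
    · obtain ⟨m', hm'S, hm'⟩ := ih (S.erase a) (Finset.erase_ssubset ha)
        (fun v hv w hw => trich v (Finset.mem_of_mem_erase hv) w (Finset.mem_of_mem_erase hw))
        (fun u hu v hv w hw => trans u (Finset.mem_of_mem_erase hu) v (Finset.mem_of_mem_erase hv)
          w (Finset.mem_of_mem_erase hw)) he
      have hm'S' := Finset.mem_of_mem_erase hm'S
      have ham' : a ≠ m' := fun h => (Finset.mem_erase.1 hm'S).1 h.symm
      by_cases hr : r a m'
      · refine ⟨a, ha, fun x hx hxa => ?_⟩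
        rcases eq_or_ne x m' with rfl | hxm'
        · exact hr
        · exact trans a ha m' hm'S' x hx hr (hm' x (Finset.mem_erase.2 ⟨hxa, hx⟩) hxm')
      · have : r m' a := (trich a ha m' hm'S' ham').resolve_left hr
        refine ⟨m', hm'S', fun x hx hxm' => ?_⟩
        rcases eq_or_ne x a with rfl | hxa
        · exact this
        · exact hm' x (Finset.mem_erase.2 ⟨hxa, hx⟩) hxm'

lemma exists_sorted (S : Finset α) :
    (∀ v ∈ S, ∀ w ∈ S, v ≠ w → r v w ∨ r w v) →
    (∀ u ∈ S, ∀ v ∈ S, ∀ w ∈ S, r u v → r v w → r u w) →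
    ∃ l : List α, l.toFinset = S ∧ l.Nodup ∧ l.Pairwise r := by
  classical
  induction S using Finset.strongInduction with
  | _ S ih =>
    intro trich trans
    rcases S.eq_empty_or_nonempty with rfl | hS
    · exact ⟨[], by simp⟩
    · obtain ⟨m, hmS, hm⟩ := exists_least r S trich trans hS
      obtain ⟨l', hl'fin, hl'nd, hl'p⟩ := ih (S.erase m) (Finset.erase_ssubset hmS)
        (fun v hv w hw => trich v (Finset.mem_of_mem_erase hv) w (Finset.mem_of_mem_erase hw))
        (fun u hu v hv w hw => trans u (Finset.mem_of_mem_erase hu) v (Finset.mem_of_mem_erase hv)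
          w (Finset.mem_of_mem_erase hw))
      have hml' : m ∉ l' := by
        intro h
        have : m ∈ S.erase m := hl'fin ▸ List.mem_toFinset.2 h
        exact (Finset.mem_erase.1 this).1 rfl
      refine ⟨m :: l', ?_, List.nodup_cons.2 ⟨hml', hl'nd⟩, List.pairwise_cons.2 ⟨?_, hl'p⟩⟩
      · rw [List.toFinset_cons, hl'fin, Finset.insert_erase hmS]
      · intro x hx
        have hxS : x ∈ S.erase m := hl'fin ▸ List.mem_toFinset.2 hx
        exact hm x (Finset.mem_of_mem_erase hxS) (Finset.mem_erase.1 hxS).1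


abbrev HP := (ℝ × ℝ) × ℝ

def hpSet (t : HP) : Set (ℝ × ℝ) := {x | t.1.1 * x.1 + t.1.2 * x.2 ≤ t.2}

lemma exists_Frep (X : Set (Set (ℝ × ℝ))) (hfin : X.Finite) :
    (∀ P ∈ X, IsClosedHalfPlane P) →
    ∃ F : Finset HP, (∀ t ∈ F, t.1 ≠ 0) ∧ ⋂₀ X = {x : ℝ × ℝ | ∀ t ∈ F, x ∈ hpSet t} := by
  classical
  refine Set.Finite.induction_on
    (motive := fun Y _ => (∀ P ∈ Y, IsClosedHalfPlane P) →
      ∃ F : Finset HP, (∀ t ∈ F, t.1 ≠ 0) ∧ ⋂₀ Y = {x : ℝ × ℝ | ∀ t ∈ F, x ∈ hpSet t})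
    X hfin (fun _ => ⟨∅, by simp, by simp⟩) ?_
  intro P X' hPX' hX'fin ih hhp
  obtain ⟨F', hF'0, hF'⟩ := ih fun Q hQ => hhp Q (Set.mem_insert_of_mem _ hQ)
  obtain ⟨a, b, c, hab, hP⟩ := hhp P (Set.mem_insert _ _)
  refine ⟨insert ((a, b), c) F', ?_, ?_⟩
  · intro t ht
    rcases Finset.mem_insert.1 ht with rfl | ht
    · simpa [Prod.ext_iff] using hab
    · exact hF'0 t ht
  · rw [Set.sInter_insert, hF', hP]
    ext x
    simp only [Set.mem_inter_iff, Set.mem_setOf_eq, Finset.mem_insert, hpSet]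
    constructor
    · rintro ⟨h1, h2⟩ t (rfl | ht)
      · exact h1
      · exact h2 t ht
    · intro h
      exact ⟨h _ (Or.inl rfl), fun t ht => h t (Or.inr ht)⟩

lemma Frep_closed (F : Finset HP) : IsClosed {x : ℝ × ℝ | ∀ t ∈ F, x ∈ hpSet t} := by
  have : {x : ℝ × ℝ | ∀ t ∈ F, x ∈ hpSet t} = ⋂ t ∈ F, hpSet t := by
    ext x; simp
  rw [this]
  refine isClosed_biInter fun t _ => ?_
  exact isClosed_le (by fun_prop) continuous_const

lemma Frep_convex (F : Finset HP) : Convex ℝ {x : ℝ × ℝ | ∀ t ∈ F, x ∈ hpSet t} := by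
  have : {x : ℝ × ℝ | ∀ t ∈ F, x ∈ hpSet t} = ⋂ t ∈ F, hpSet t := by
    ext x; simp
  rw [this]
  refine convex_iInter fun t => convex_iInter fun _ => ?_
  intro x hx y hy s u hs hu hsu
  simp only [hpSet, Set.mem_setOf_eq] at *
  have e1 : (s • x + u • y).1 = s * x.1 + u * y.1 := rfl
  have e2 : (s • x + u • y).2 = s * x.2 + u * y.2 := rfl
  rw [e1, e2]
  have hu' : u = 1 - s := by linarith
  subst hu'
  nlinarith [mul_le_mul_of_nonneg_left hx hs, mul_le_mul_of_nonneg_left hy hu]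

lemma extremePoints_finite (K : Set (ℝ × ℝ)) (F : Finset HP) (hF0 : ∀ t ∈ F, t.1 ≠ 0)
    (hK : K = {x : ℝ × ℝ | ∀ t ∈ F, x ∈ hpSet t}) : (K.extremePoints ℝ).Finite := by
  classical
  set G : HP × HP → ℝ × ℝ := fun st =>
    ((st.1.2 * st.2.1.2 - st.2.2 * st.1.1.2) / det2 st.1.1 st.2.1,
     (st.1.1.1 * st.2.2 - st.2.1.1 * st.1.2) / det2 st.1.1 st.2.1) with hG
  apply Set.Finite.subset (Finset.finite_toSet ((F ×ˢ F).image G))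
  intro x hx
  obtain ⟨hxK, hxe⟩ := (mem_extremePoints).1 hx
  have hxF : ∀ t ∈ F, t.1.1 * x.1 + t.1.2 * x.2 ≤ t.2 := by
    intro t ht; have := hK ▸ hxK; exact this t ht
  -- there are two tight constraints with independent normals
  have key : ∃ s ∈ F, ∃ t ∈ F, s.1.1 * x.1 + s.1.2 * x.2 = s.2 ∧
      t.1.1 * x.1 + t.1.2 * x.2 = t.2 ∧ det2 s.1 t.1 ≠ 0 := by
    by_contra hcon
    push_neg at hcon
    set Ft := F.filter (fun t => t.1.1 * x.1 + t.1.2 * x.2 = t.2) with hFt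
    -- choose direction d orthogonal to all tight normals
    have hd : ∃ d : ℝ × ℝ, d ≠ 0 ∧ ∀ t ∈ Ft, t.1.1 * d.1 + t.1.2 * d.2 = 0 := by
      rcases Ft.eq_empty_or_nonempty with he | ⟨t₀, ht₀⟩
      · exact ⟨(1, 0), by simp [Prod.ext_iff], by simp [he]⟩
      · refine ⟨(-t₀.1.2, t₀.1.1), ?_, ?_⟩
        · have hne := hF0 t₀ (Finset.mem_of_mem_filter t₀ ht₀)
          intro h
          rw [Prod.ext_iff] at h
          obtain ⟨h1, h2⟩ := h
          simp only [Prod.fst_zero, Prod.snd_zero, neg_eq_zero] at h1 h2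
          exact hne (Prod.ext_iff.2 ⟨by simpa using h2, by simpa using h1⟩)
        · intro t ht
          have h0 : det2 t₀.1 t.1 = 0 :=
            hcon t₀ (Finset.mem_of_mem_filter t₀ ht₀) t (Finset.mem_of_mem_filter t ht)
              (Finset.mem_filter.1 ht₀).2 (Finset.mem_filter.1 ht).2
          simp only [det2] at h0
          show t.1.1 * -t₀.1.2 + t.1.2 * t₀.1.1 = 0
          linarith [h0]
    obtain ⟨d, hd0, hdperp⟩ := hd
    -- a positive epsilon keeping x ± ε d in K
    have heps : ∃ ε : ℝ, 0 < ε ∧ ∀ t ∈ F, (t.1.1 * (x.1 + ε * d.1) + t.1.2 * (x.2 + ε * d.2) ≤ t.2)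
        ∧ (t.1.1 * (x.1 - ε * d.1) + t.1.2 * (x.2 - ε * d.2) ≤ t.2) := by
      set Fs := F.filter (fun t => t.1.1 * x.1 + t.1.2 * x.2 < t.2) with hFs
      have hsplit : ∀ t ∈ F, t ∈ Ft ∨ t ∈ Fs := by
        intro t ht
        rcases lt_or_eq_of_le (hxF t ht) with h | h
        · right; exact Finset.mem_filter.2 ⟨ht, h⟩
        · left; exact Finset.mem_filter.2 ⟨ht, h⟩
      rcases Fs.eq_empty_or_nonempty with he | hne
      · refine ⟨1, one_pos, fun t ht => ?_⟩
        have htt : t ∈ Ft := by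
          rcases hsplit t ht with h | h
          · exact h
          · rw [he] at h; exact absurd h (Finset.notMem_empty t)
        have := hdperp t htt
        have := (Finset.mem_filter.1 htt).2
        constructor <;> nlinarith
      · set ε := Fs.inf' hne (fun t => (t.2 - (t.1.1 * x.1 + t.1.2 * x.2)) / (|t.1.1 * d.1 + t.1.2 * d.2| + 1)) with hε
        have hεpos : 0 < ε := by
          rw [hε, Finset.lt_inf'_iff]
          intro t ht
          have hslack := (Finset.mem_filter.1 ht).2
          exact div_pos (by linarith) (by positivity)
        refine ⟨ε, hεpos, fun t ht => ?_⟩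
        rcases hsplit t ht with htt | hts
        · have := hdperp t htt
          have := (Finset.mem_filter.1 htt).2
          constructor <;> nlinarith
        · have hle := Finset.inf'_le (f := fun t : HP => (t.2 - (t.1.1 * x.1 + t.1.2 * x.2)) / (|t.1.1 * d.1 + t.1.2 * d.2| + 1)) hts
          have hslack := (Finset.mem_filter.1 hts).2
          set m := |t.1.1 * d.1 + t.1.2 * d.2| with hm
          have hm0 : 0 ≤ m := abs_nonneg _
          have hmle : t.1.1 * d.1 + t.1.2 * d.2 ≤ m := le_abs_self _
          have hmle' : -(t.1.1 * d.1 + t.1.2 * d.2) ≤ m := neg_le_abs _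
          have hdiv : ε * (m + 1) ≤ t.2 - (t.1.1 * x.1 + t.1.2 * x.2) := by
            rw [← le_div_iff₀ (by positivity)]
            exact hle
          have h1 : ε * (t.1.1 * d.1 + t.1.2 * d.2) ≤ ε * m := by
            apply mul_le_mul_of_nonneg_left hmle hεpos.le
          have h2 : ε * (-(t.1.1 * d.1 + t.1.2 * d.2)) ≤ ε * m := by
            apply mul_le_mul_of_nonneg_left hmle' hεpos.le
          constructor <;> nlinarith
    obtain ⟨ε, hεpos, hεK⟩ := heps
    have hy1 : x + ε • d ∈ K := by
      rw [hK]
      intro t ht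
      have := (hεK t ht).1
      simpa [hpSet, Prod.ext_iff, smul_eq_mul] using this
    have hy2 : x - ε • d ∈ K := by
      rw [hK]
      intro t ht
      have := (hεK t ht).2
      simpa [hpSet, Prod.ext_iff, smul_eq_mul] using this
    have hseg : x ∈ openSegment ℝ (x + ε • d) (x - ε • d) := by
      refine ⟨1/2, 1/2, by norm_num, by norm_num, by norm_num, ?_⟩
      module
    have := (hxe _ hy1 _ hy2 hseg).1
    have : ε • d = 0 := by
      have h := this
      calc ε • d = (x + ε • d) - x := by abel
        _ = 0 := by rw [h]; abel
    rcases smul_eq_zero.1 this with h | h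
    · exact hεpos.ne' h
    · exact hd0 h
  obtain ⟨s, hsF, t, htF, hsx, htx, hdet⟩ := key
  refine Finset.mem_coe.2 (Finset.mem_image.2 ⟨(s, t), Finset.mem_product.2 ⟨hsF, htF⟩, ?_⟩)
  show ((s.2 * t.1.2 - t.2 * s.1.2) / det2 s.1 t.1,
    (s.1.1 * t.2 - t.1.1 * s.2) / det2 s.1 t.1) = x
  simp only [det2] at hdet
  rw [Prod.ext_iff]
  constructor
  · show (s.2 * t.1.2 - t.2 * s.1.2) / det2 s.1 t.1 = x.1
    simp only [det2]
    rw [div_eq_iff hdet]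
    linear_combination s.1.2 * htx - t.1.2 * hsx
  · show (s.1.1 * t.2 - t.1.1 * s.2) / det2 s.1 t.1 = x.2
    simp only [det2]
    rw [div_eq_iff hdet]
    linear_combination t.1.1 * hsx - s.1.1 * htx



-- coordinate helpers
lemma psub_fst (x y : ℝ × ℝ) : (x - y).1 = x.1 - y.1 := rfl
lemma psub_snd (x y : ℝ × ℝ) : (x - y).2 = x.2 - y.2 := rfl
lemma padd_fst (x y : ℝ × ℝ) : (x + y).1 = x.1 + y.1 := rfl
lemma padd_snd (x y : ℝ × ℝ) : (x + y).2 = x.2 + y.2 := rfl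
lemma psmul_fst (t : ℝ) (x : ℝ × ℝ) : (t • x).1 = t * x.1 := rfl
lemma psmul_snd (t : ℝ) (x : ℝ × ℝ) : (t • x).2 = t * x.2 := rfl

lemma pne_zero_iff {x : ℝ × ℝ} : x ≠ 0 ↔ (x.1 ≠ 0 ∨ x.2 ≠ 0) := by
  constructor
  · intro h
    by_contra hc; push_neg at hc
    exact h (Prod.ext hc.1 hc.2)
  · rintro (h | h) hc <;> rw [hc] at h <;> simp at h

/-- the halfplane determined by `det2 d (· - O) ≤ 0` -/
lemma halfplane_closed (d O : ℝ × ℝ) : IsClosed {x : ℝ × ℝ | det2 d (x - O) ≤ 0} := by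
  have : {x : ℝ × ℝ | det2 d (x - O) ≤ 0}
      = {x : ℝ × ℝ | d.1 * (x.2 - O.2) - d.2 * (x.1 - O.1) ≤ 0} := rfl
  rw [this]
  exact isClosed_le (by fun_prop) continuous_const

lemma halfplane_convex (d O : ℝ × ℝ) : Convex ℝ {x : ℝ × ℝ | det2 d (x - O) ≤ 0} := by
  intro x hx y hy a b ha hb hab
  simp only [Set.mem_setOf_eq, det2, psub_fst, psub_snd, padd_fst, padd_snd,
    psmul_fst, psmul_snd] at *
  have hb' : b = 1 - a := by linarith
  subst hb'
  nlinarith [mul_le_mul_of_nonneg_left hx ha, mul_le_mul_of_nonneg_left hy hb]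

/-- no halfplane through an interior point contains K -/
lemma no_halfplane {K : Set (ℝ × ℝ)} {O d : ℝ × ℝ}
    (hKM : closure (convexHull ℝ (K.extremePoints ℝ)) = K)
    (hO : O ∈ interior K) (hd : d ≠ 0)
    (h : ∀ w ∈ K.extremePoints ℝ, det2 d (w - O) ≤ 0) : False := by
  have hKH : K ⊆ {x : ℝ × ℝ | det2 d (x - O) ≤ 0} := by
    rw [← hKM]
    exact closure_minimal (convexHull_min h (halfplane_convex d O)) (halfplane_closed d O)
  obtain ⟨ε, hε, hball⟩ := Metric.isOpen_iff.1 isOpen_interior O hO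
  have hnorm : 0 < |d.1| + |d.2| := by
    rcases pne_zero_iff.1 hd with h1 | h1
    · have := abs_pos.2 h1; have := abs_nonneg d.2; linarith
    · have := abs_pos.2 h1; have := abs_nonneg d.1; linarith
  set t : ℝ := ε / (2 * (|d.1| + |d.2|)) with htdef
  have ht : 0 < t := by positivity
  set n : ℝ × ℝ := (-d.2, d.1) with hn
  set y : ℝ × ℝ := O + t • n with hy
  have hyball : y ∈ Metric.ball O ε := by
    rw [Metric.mem_ball]
    have h1 : y - O = t • n := by rw [hy]; abel
    have h2 : dist y O = ‖t • n‖ := by rw [dist_eq_norm, h1]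
    rw [h2, norm_smul]
    have h3 : ‖n‖ ≤ |d.1| + |d.2| := by
      rw [hn, Prod.norm_def]
      simp only [Real.norm_eq_abs, abs_neg]
      apply max_le <;> [linarith [abs_nonneg d.1]; linarith [abs_nonneg d.2]]
    have h4 : ‖t‖ = t := by rw [Real.norm_eq_abs, abs_of_pos ht]
    rw [h4]
    calc t * ‖n‖ ≤ t * (|d.1| + |d.2|) := by
          exact mul_le_mul_of_nonneg_left h3 ht.le
      _ = ε / 2 := by rw [htdef]; field_simp
      _ < ε := by linarith
  have hyK : y ∈ K := interior_subset (hball hyball)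
  have hle := hKH hyK
  have h1 : y - O = t • n := by rw [hy]; abel
  rw [Set.mem_setOf_eq, h1] at hle
  have h2 : det2 d (t • n) = t * (d.1^2 + d.2^2) := by
    simp only [det2, hn, psmul_fst, psmul_snd]; ring
  have hdd : 0 < d.1^2 + d.2^2 := by
    rcases pne_zero_iff.1 hd with h1' | h1'
    · have : 0 < d.1^2 := by positivity
      nlinarith [sq_nonneg d.2]
    · have : 0 < d.2^2 := by positivity
      nlinarith [sq_nonneg d.1]
  rw [h2] at hle
  nlinarith

lemma extreme_ne_interior {K : Set (ℝ × ℝ)} {O : ℝ × ℝ} (hO : O ∈ interior K) :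
    O ∉ K.extremePoints ℝ := by
  intro hOx
  obtain ⟨ε, hε, hball⟩ := Metric.isOpen_iff.1 isOpen_interior O hO
  set u : ℝ × ℝ := (ε/2, 0) with hu
  have hun : ‖u‖ = ε/2 := by
    rw [hu, Prod.norm_def]
    simp only [Real.norm_eq_abs, norm_zero]
    rw [abs_of_pos (by linarith)]
    exact max_eq_left (by linarith)
  have h1 : O + u ∈ K := by
    refine interior_subset (hball ?_)
    rw [Metric.mem_ball, dist_eq_norm]
    have : O + u - O = u := by abel
    rw [this, hun]; linarith
  have h2 : O - u ∈ K := by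
    refine interior_subset (hball ?_)
    rw [Metric.mem_ball, dist_eq_norm]
    have : O - u - O = -u := by abel
    rw [this, norm_neg, hun]; linarith
  have hseg : O ∈ openSegment ℝ (O + u) (O - u) := by
    refine ⟨1/2, 1/2, by norm_num, by norm_num, by norm_num, ?_⟩
    module
  have := ((mem_extremePoints.1 hOx).2 _ h1 _ h2 hseg).1
  have hu0 : u = 0 := by
    have : O + u - O = O - O := by rw [this]
    simpa using this
  rw [hu] at hu0
  have := congrArg Prod.fst hu0
  simp at this
  linarith

lemma extreme_not_parallel {K : Set (ℝ × ℝ)} {O : ℝ × ℝ} (hO : O ∈ interior K)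
    {x w : ℝ × ℝ} (hx : x ∈ K.extremePoints ℝ) (hw : w ∈ K.extremePoints ℝ) (hxw : x ≠ w)
    {t : ℝ} (ht : 0 < t) : w - O ≠ t • (x - O) := by
  intro heq
  have hOK : O ∈ K := interior_subset hO
  have hxK : x ∈ K := hx.1
  have hwK : w ∈ K := hw.1
  have hxO : x ≠ O := fun h => extreme_ne_interior hO (h ▸ hx)
  have hwO : w ≠ O := fun h => extreme_ne_interior hO (h ▸ hw)
  rcases lt_trichotomy t 1 with h1 | h1 | h1
  · -- w strictly between O and x
    have hseg : w ∈ openSegment ℝ O x := by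
      refine ⟨1 - t, t, by linarith, ht, by ring, ?_⟩
      calc (1 - t) • O + t • x = O + t • (x - O) := by module
        _ = O + (w - O) := by rw [← heq]
        _ = w := by abel
    have := ((mem_extremePoints.1 hw).2 _ hOK _ hxK hseg).1
    exact hwO this.symm
  · subst h1
    rw [one_smul] at heq
    exact hxw (sub_left_injective heq.symm)
  · -- x strictly between O and w
    have hseg : x ∈ openSegment ℝ O w := by
      refine ⟨1 - 1/t, 1/t, by
          have : 1/t < 1 := by rw [div_lt_one (by linarith)]; linarith
          linarith,
        by positivity, by ring, ?_⟩
      have hx' : x - O = (1/t) • (w - O) := by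
        rw [heq, smul_smul]
        rw [one_div_mul_cancel (by linarith), one_smul]
      calc (1 - 1/t) • O + (1/t) • w = O + (1/t) • (w - O) := by module
        _ = O + (x - O) := by rw [← hx']
        _ = x := by abel
    have := ((mem_extremePoints.1 hx).2 _ hOK _ hwK hseg).1
    exact hxO this.symm

/-- points strictly inside the triangle O a b are in K -/
lemma triangle_mem {K : Set (ℝ × ℝ)} (hconv : Convex ℝ K) {O a b x : ℝ × ℝ}
    (hOK : O ∈ K) (haK : a ∈ K) (hbK : b ∈ K)
    (hD : 0 < det2 (a - O) (b - O)) (h1 : 0 < det2 (a - O) (x - O))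
    (h2 : 0 < det2 (x - O) (b - O)) (h3 : 0 < det2 (b - a) (x - a)) : x ∈ interior K := by
  set T : Set (ℝ × ℝ) := {y | 0 < det2 (a - O) (y - O) ∧ 0 < det2 (y - O) (b - O) ∧
    0 < det2 (b - a) (y - a)} with hT
  have hTopen : IsOpen T := by
    have e1 : IsOpen {y : ℝ × ℝ | 0 < det2 (a - O) (y - O)} := by
      have : {y : ℝ × ℝ | 0 < det2 (a - O) (y - O)}
          = {y : ℝ × ℝ | 0 < (a - O).1 * (y.2 - O.2) - (a - O).2 * (y.1 - O.1)} := rfl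
      rw [this]; exact isOpen_lt continuous_const (by fun_prop)
    have e2 : IsOpen {y : ℝ × ℝ | 0 < det2 (y - O) (b - O)} := by
      have : {y : ℝ × ℝ | 0 < det2 (y - O) (b - O)}
          = {y : ℝ × ℝ | 0 < (y.1 - O.1) * (b - O).2 - (y.2 - O.2) * (b - O).1} := rfl
      rw [this]; exact isOpen_lt continuous_const (by fun_prop)
    have e3 : IsOpen {y : ℝ × ℝ | 0 < det2 (b - a) (y - a)} := by
      have : {y : ℝ × ℝ | 0 < det2 (b - a) (y - a)}
          = {y : ℝ × ℝ | 0 < (b - a).1 * (y.2 - a.2) - (b - a).2 * (y.1 - a.1)} := rfl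
      rw [this]; exact isOpen_lt continuous_const (by fun_prop)
    have : T = {y : ℝ × ℝ | 0 < det2 (a - O) (y - O)} ∩
        ({y : ℝ × ℝ | 0 < det2 (y - O) (b - O)} ∩ {y : ℝ × ℝ | 0 < det2 (b - a) (y - a)}) := by
      ext y; simp [hT, and_assoc]
    rw [this]
    exact e1.inter (e2.inter e3)
  have hTK : T ⊆ K := by
    intro y hy
    obtain ⟨k1, k2, k3⟩ := hy
    set D := det2 (a - O) (b - O) with hD'
    set β := det2 (y - O) (b - O) / D with hβ'
    set γ := det2 (a - O) (y - O) / D with hγ'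
    have hβ : 0 < β := div_pos k2 hD
    have hγ : 0 < γ := div_pos k1 hD
    have hiden : det2 (b - a) (y - a) = D - det2 (y - O) (b - O) - det2 (a - O) (y - O) := by
      simp only [det2, psub_fst, psub_snd, hD']; ring
    have hsum : β + γ < 1 := by
      rw [hβ', hγ', ← add_div, div_lt_one hD]
      rw [hiden] at k3; linarith
    have hs : 0 < β + γ := by linarith
    set z := (β/(β+γ)) • a + (γ/(β+γ)) • b with hz
    have hzK : z ∈ K := by
      apply hconv haK hbK (by positivity) (by positivity)
      rw [← add_div, div_self hs.ne']
    have hyK : y ∈ K := by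
      have hmem := hconv hOK hzK (by linarith : (0:ℝ) ≤ 1 - (β+γ)) hs.le (by ring)
      have hzeq : (β+γ) • z = β • a + γ • b := by
        rw [hz, smul_add, smul_smul, smul_smul]
        rw [mul_div_cancel₀ _ hs.ne', mul_div_cancel₀ _ hs.ne']
      have hyeq : (1 - (β+γ)) • O + (β+γ) • z = y := by
        rw [hzeq]
        -- coordinatewise verification
        have hy1 : (y - O).1 = β * (a - O).1 + γ * (b - O).1 := by
          rw [hβ', hγ', div_mul_eq_mul_div, div_mul_eq_mul_div, ← add_div, eq_div_iff hD.ne', hD']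
          simp only [det2, psub_fst, psub_snd]
          ring
        have hy2 : (y - O).2 = β * (a - O).2 + γ * (b - O).2 := by
          rw [hβ', hγ', div_mul_eq_mul_div, div_mul_eq_mul_div, ← add_div, eq_div_iff hD.ne', hD']
          simp only [det2, psub_fst, psub_snd]
          ring
        apply Prod.ext
        · simp only [padd_fst, psmul_fst, psub_fst] at hy1 ⊢
          linarith [hy1]
        · simp only [padd_snd, psmul_snd, psub_snd] at hy2 ⊢
          linarith [hy2]
      rw [hyeq] at hmem
      exact hmem
    exact hyK
  exact mem_interior.2 ⟨T, hTK, hTopen, ⟨h1, h2, h3⟩⟩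

-- bilinearity of det2
lemma det2_smul_right (c : ℝ) (u x : ℝ × ℝ) : det2 u (c • x) = c * det2 u x := by
  simp only [det2, psmul_fst, psmul_snd]; ring
lemma det2_smul_left (c : ℝ) (u x : ℝ × ℝ) : det2 (c • u) x = c * det2 u x := by
  simp only [det2, psmul_fst, psmul_snd]; ring
lemma det2_add_right (u x y : ℝ × ℝ) : det2 u (x + y) = det2 u x + det2 u y := by
  simp only [det2, padd_fst, padd_snd]; ring
lemma det2_sub_right (u x y : ℝ × ℝ) : det2 u (x - y) = det2 u x - det2 u y := by
  simp only [det2, psub_fst, psub_snd]; ring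
lemma det2_self (u : ℝ × ℝ) : det2 u u = 0 := by simp only [det2]; ring
lemma det2_add_left (x y u : ℝ × ℝ) : det2 (x + y) u = det2 x u + det2 y u := by
  simp only [det2, padd_fst, padd_snd]; ring
lemma det2_neg_left (u x : ℝ × ℝ) : det2 (-u) x = - det2 u x := by
  have h1 : (-u).1 = -u.1 := rfl
  have h2 : (-u).2 = -u.2 := rfl
  simp only [det2, h1, h2]; ring

lemma hh_nonneg {v : ℝ × ℝ} (h : hh v) : 0 ≤ v.2 := by
  rcases h with h | ⟨h, _⟩ <;> linarith
lemma hh_axis {v : ℝ × ℝ} (h : hh v) (h2 : v.2 = 0) : 0 < v.1 := by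
  rcases h with h | ⟨_, h⟩ <;> [linarith; exact h]
lemma not_hh_nonpos {v : ℝ × ℝ} (h : ¬ hh v) : v.2 ≤ 0 := by
  unfold hh at h; push_neg at h; exact h.1
lemma not_hh_axis {v : ℝ × ℝ} (hv : v ≠ 0) (h : ¬ hh v) (h2 : v.2 = 0) : v.1 < 0 := by
  rcases (not_hh_iff hv).1 h with h' | ⟨_, h'⟩ <;> [linarith; exact h']

-- case lemmas for halfplane arguments
lemma edge_low {a b w : ℝ × ℝ} (hb0 : b ≠ 0) (ha : hh a) (hb : ¬ hh b) (hw : ¬ hh w)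
    (hab : det2 a b ≤ 0) (hbw : 0 < det2 b w) : det2 a w ≤ 0 := by
  have J := detJ a b w
  have ha2 := hh_nonneg ha
  have hb2 := not_hh_nonpos hb
  have hw2 := not_hh_nonpos hw
  rcases lt_or_eq_of_le hb2 with h | h
  · nlinarith
  · have hb1 : b.1 < 0 := not_hh_axis hb0 hb h
    have he : det2 a b = - (a.2 * b.1) := by simp only [det2, h]; ring
    have ha2' : a.2 = 0 := by nlinarith
    have ha1 : 0 < a.1 := hh_axis ha ha2'
    have : det2 a w = a.1 * w.2 := by simp only [det2, ha2']; ring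
    nlinarith

lemma edge_high {a b w : ℝ × ℝ} (ha0 : a ≠ 0) (ha : ¬ hh a) (hb : hh b) (hw : hh w)
    (hab : det2 a b ≤ 0) (hbw : 0 < det2 b w) : det2 a w ≤ 0 := by
  have J := detJ a b w
  have ha2 := not_hh_nonpos ha
  have hb2 := hh_nonneg hb
  have hw2 := hh_nonneg hw
  rcases lt_or_eq_of_le hb2 with h | h
  · nlinarith
  · have hb1 : 0 < b.1 := hh_axis hb h.symm
    have he : det2 a b = - (a.2 * b.1) := by simp only [det2, ← h]; ring
    have ha2' : a.2 = 0 := by nlinarith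
    have ha1 : a.1 < 0 := not_hh_axis ha0 ha ha2'
    have : det2 a w = a.1 * w.2 := by simp only [det2, ha2']; ring
    nlinarith

lemma caseG1 {a b w : ℝ × ℝ} (ha0 : a ≠ 0) (hb0 : b ≠ 0)
    (ha : ¬ hh a) (hb : ¬ hh b) (hw : hh w)
    (hab : 0 < det2 a b) (haw : 0 < det2 a w) (hwb : 0 < det2 w b) : False := by
  have J := detJ a w b   -- det2 a b * w.2 = det2 a w * b.2 + det2 w b * a.2
  have ha2 := not_hh_nonpos ha
  have hb2 := not_hh_nonpos hb
  have hw2 := hh_nonneg hw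
  have hz1 : w.2 = 0 := by nlinarith
  have hz2 : b.2 = 0 := by nlinarith
  have hz3 : a.2 = 0 := by nlinarith
  have : det2 a b = 0 := by simp only [det2, hz2, hz3]; ring
  linarith

lemma caseG2 {a b w : ℝ × ℝ} (hw0 : w ≠ 0)
    (ha : hh a) (hb : hh b) (hw : ¬ hh w)
    (hab : 0 < det2 a b) (haw : 0 < det2 a w) (hwb : 0 < det2 w b) : False := by
  have J := detJ a w b
  have ha2 := hh_nonneg ha
  have hb2 := hh_nonneg hb
  have hw2 := not_hh_nonpos hw
  have hz1 : w.2 = 0 := by nlinarith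
  have hz2 : b.2 = 0 := by nlinarith
  have hz3 : a.2 = 0 := by nlinarith
  have : det2 a b = 0 := by simp only [det2, hz2, hz3]; ring
  linarith

lemma sectorW1 {a b x : ℝ × ℝ} (ha : ¬ hh a) (hb : hh b) (hx : hh x)
    (hab : 0 < det2 a b) (hxb : 0 < det2 x b) : 0 ≤ det2 a x := by
  have J := detJ a x b   -- det2 a b * x.2 = det2 a x * b.2 + det2 x b * a.2
  have ha2 := not_hh_nonpos ha
  have hb2 := hh_nonneg hb
  have hx2 := hh_nonneg hx
  rcases lt_or_eq_of_le hb2 with h | h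
  · nlinarith
  · exfalso
    have hb1 : 0 < b.1 := hh_axis hb h.symm
    have : det2 x b = - (x.2 * b.1) := by simp only [det2, ← h]; ring
    nlinarith

lemma sectorW2 {a b x : ℝ × ℝ} (ha0 : a ≠ 0) (ha : ¬ hh a) (hb : hh b) (hx : ¬ hh x)
    (hab : 0 < det2 a b) (hax : 0 < det2 a x) : 0 ≤ det2 x b := by
  have J := detJ a x b
  have ha2 := not_hh_nonpos ha
  have hb2 := hh_nonneg hb
  have hx2 := not_hh_nonpos hx
  rcases lt_or_eq_of_le ha2 with h | h
  · nlinarith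
  · exfalso
    have ha1 : a.1 < 0 := not_hh_axis ha0 ha h
    have : det2 a b = a.1 * b.2 := by simp only [det2, h]; ring
    nlinarith

lemma sectorM1 {a b x : ℝ × ℝ} (ha : hh a) (hx : hh x) (hb : ¬ hh b)
    (hab : 0 < det2 a b) (hax : 0 < det2 a x) : 0 ≤ det2 x b := by
  have J := detJ a x b
  have ha2 := hh_nonneg ha
  have hb2 := not_hh_nonpos hb
  have hx2 := hh_nonneg hx
  rcases lt_or_eq_of_le ha2 with h | h
  · nlinarith
  · exfalso
    have ha1 : 0 < a.1 := hh_axis ha h.symm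
    have : det2 a b = a.1 * b.2 := by simp only [det2, h.symm]; ring
    nlinarith

lemma sectorM2 {a b x : ℝ × ℝ} (hb0 : b ≠ 0) (ha : hh a) (hx : ¬ hh x) (hb : ¬ hh b)
    (hab : 0 < det2 a b) (hxb : 0 < det2 x b) : 0 ≤ det2 a x := by
  have J := detJ a x b
  have ha2 := hh_nonneg ha
  have hb2 := not_hh_nonpos hb
  have hx2 := not_hh_nonpos hx
  rcases lt_or_eq_of_le hb2 with h | h
  · nlinarith
  · exfalso
    have hb1 : b.1 < 0 := not_hh_axis hb0 hb h
    have : det2 x b = - (x.2 * b.1) := by simp only [det2, h]; ring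
    nlinarith

/-- a point of the boundary line of a supporting halfplane is not interior -/
lemma interior_strict {K : Set (ℝ × ℝ)} {u a q : ℝ × ℝ} (hu : u ≠ 0)
    (hsupp : ∀ x ∈ K, 0 ≤ det2 u (x - a)) (hfq : det2 u (q - a) = 0)
    (hq : q ∈ interior K) : False := by
  obtain ⟨ε, hε, hball⟩ := Metric.isOpen_iff.1 isOpen_interior q hq
  have hnorm : 0 < |u.1| + |u.2| := by
    rcases pne_zero_iff.1 hu with h1 | h1
    · have := abs_pos.2 h1; have := abs_nonneg u.2; linarith
    · have := abs_pos.2 h1; have := abs_nonneg u.1; linarith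
  set t : ℝ := ε / (2 * (|u.1| + |u.2|)) with htdef
  have ht : 0 < t := by positivity
  set n : ℝ × ℝ := (-u.2, u.1) with hn
  set y : ℝ × ℝ := q - t • n with hy
  have hyball : y ∈ Metric.ball q ε := by
    rw [Metric.mem_ball]
    have h1 : y - q = -(t • n) := by rw [hy]; abel
    have h2 : dist y q = ‖t • n‖ := by rw [dist_eq_norm, h1, norm_neg]
    rw [h2, norm_smul]
    have h3 : ‖n‖ ≤ |u.1| + |u.2| := by
      rw [hn, Prod.norm_def]
      simp only [Real.norm_eq_abs, abs_neg]
      apply max_le <;> [linarith [abs_nonneg u.1]; linarith [abs_nonneg u.2]]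
    have h4 : ‖t‖ = t := by rw [Real.norm_eq_abs, abs_of_pos ht]
    rw [h4]
    calc t * ‖n‖ ≤ t * (|u.1| + |u.2|) := mul_le_mul_of_nonneg_left h3 ht.le
      _ = ε / 2 := by rw [htdef]; field_simp
      _ < ε := by linarith
  have hyK : y ∈ K := interior_subset (hball hyball)
  have hge := hsupp y hyK
  have he : y - a = (q - a) - t • n := by rw [hy]; abel
  rw [he, det2_sub_right, hfq, det2_smul_right] at hge
  have h2 : det2 u n = u.1^2 + u.2^2 := by
    simp only [det2, hn]; ring
  have hdd : 0 < u.1^2 + u.2^2 := by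
    rcases pne_zero_iff.1 hu with h1' | h1'
    · have : 0 < u.1^2 := by positivity
      nlinarith [sq_nonneg u.2]
    · have : 0 < u.2^2 := by positivity
      nlinarith [sq_nonneg u.1]
  rw [h2] at hge
  nlinarith

set_option maxHeartbeats 2000000 in
theorem main {K : Set (ℝ × ℝ)} (hconv : Convex ℝ K) (hcl : IsClosed K) {O : ℝ × ℝ}
    (hO : O ∈ interior K) (hVfin : (K.extremePoints ℝ).Finite)
    (hKM : closure (convexHull ℝ (K.extremePoints ℝ)) = K) :
    ∃ p : ℕ, 3 ≤ p ∧ ∃ A : ℤ → ℝ × ℝ, IsCPD p A ∧ frontier K = Polyline p A := by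
  classical
  set V := K.extremePoints ℝ with hV
  have hVK : V ⊆ K := fun x hx => hx.1
  have hOK : O ∈ K := interior_subset hO
  have hvne : ∀ w ∈ V, w - O ≠ 0 := by
    intro w hw
    rw [sub_ne_zero]
    exact fun h => extreme_ne_interior hO (h ▸ hw)
  set Vf := hVfin.toFinset with hVf
  have hVfmem : ∀ x, x ∈ Vf ↔ x ∈ V := fun x => hVfin.mem_toFinset
  obtain ⟨l, hlfin, hlnd, hlp⟩ := exists_sorted (fun v w => slt (v - O) (w - O)) Vf
    (fun v hv w hw hvw => slt_trichotomy (hvne v ((hVfmem v).1 hv)) (hvne w ((hVfmem w).1 hw))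
      (fun t ht => extreme_not_parallel hO ((hVfmem v).1 hv) ((hVfmem w).1 hw) hvw ht))
    (fun u hu w hw z hz => slt_trans (hvne u ((hVfmem u).1 hu)) (hvne w ((hVfmem w).1 hw))
      (hvne z ((hVfmem z).1 hz)))
  have hlmem : ∀ x, x ∈ l ↔ x ∈ V := by
    intro x; rw [← hVfmem, ← hlfin, List.mem_toFinset]
  set p := l.length with hp
  -- step 1 : p ≥ 3
  have hp3 : 3 ≤ p := by
    by_contra hle
    push_neg at hle
    have hVab : ∃ a b : ℝ × ℝ, ∀ w ∈ V, w = a ∨ w = b := by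
      match l, hp, hlmem with
      | [], _, hlmem => exact ⟨0, 0, fun w hw => absurd ((hlmem w).2 hw) (List.not_mem_nil)⟩
      | [a], _, hlmem => exact ⟨a, a, fun w hw => by
          have := (hlmem w).2 hw
          simp only [List.mem_singleton] at this
          exact Or.inl this⟩
      | [a, b], _, hlmem => exact ⟨a, b, fun w hw => by
          have := (hlmem w).2 hw
          simp only [List.mem_cons, List.mem_singleton, List.not_mem_nil, or_false] at this
          exact this⟩
      | a :: b :: c :: t, hp, _ => exact absurd hle (by
          rw [hp, List.length_cons, List.length_cons, List.length_cons]; omega)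
    obtain ⟨a, b, hab⟩ := hVab
    have hKseg : K ⊆ segment ℝ a b := by
      rw [← hKM]
      have hclseg : IsClosed (segment ℝ a b) := by
        rw [segment_eq_image ℝ a b]
        exact (isCompact_Icc.image (by fun_prop)).isClosed
      refine closure_minimal (convexHull_min ?_ (convex_segment a b)) hclseg
      intro w hw
      rcases hab w hw with rfl | rfl
      · exact left_mem_segment ℝ w b
      · exact right_mem_segment ℝ a w
    obtain ⟨ε, hε, hball⟩ := Metric.isOpen_iff.1 isOpen_interior O hO
    have hmem : ∀ z : ℝ × ℝ, ‖z‖ < ε → ∃ t : ℝ, O + z - a = t • (b - a) := by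
      intro z hz
      have hzK : O + z ∈ segment ℝ a b := by
        apply hKseg
        refine interior_subset (hball ?_)
        rw [Metric.mem_ball, dist_eq_norm]
        have : O + z - O = z := by abel
        rw [this]; exact hz
      rw [segment_eq_image ℝ a b] at hzK
      obtain ⟨t, _, ht⟩ := hzK
      refine ⟨t, ?_⟩
      rw [← ht]
      module
    have h1 : ‖((ε/2, 0) : ℝ × ℝ)‖ < ε := by
      rw [Prod.norm_def]
      simp only [Real.norm_eq_abs, norm_zero]
      rw [abs_of_nonneg (by linarith : (0:ℝ) ≤ ε/2), max_eq_left (by linarith : (0:ℝ) ≤ ε/2)]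
      linarith
    have h2 : ‖((0, ε/2) : ℝ × ℝ)‖ < ε := by
      rw [Prod.norm_def]
      simp only [Real.norm_eq_abs, norm_zero]
      rw [abs_of_nonneg (by linarith : (0:ℝ) ≤ ε/2), max_eq_right (by linarith : (0:ℝ) ≤ ε/2)]
      linarith
    obtain ⟨t0, ht0⟩ := hmem 0 (by simp [hε])
    obtain ⟨t1, ht1⟩ := hmem ((ε/2, 0) : ℝ × ℝ) h1
    obtain ⟨t2, ht2⟩ := hmem ((0, ε/2) : ℝ × ℝ) h2
    -- subtracting gives (ε/2, 0) and (0, ε/2) both multiples of b - a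
    have e1 : ((ε/2, 0) : ℝ × ℝ) = (t1 - t0) • (b - a) := by
      have : (O + (ε/2, 0) - a) - (O + 0 - a) = ((ε/2, 0) : ℝ × ℝ) := by abel
      rw [← this, ht1, ht0, sub_smul]
    have e2 : ((0, ε/2) : ℝ × ℝ) = (t2 - t0) • (b - a) := by
      have : (O + (0, ε/2) - a) - (O + 0 - a) = ((0, ε/2) : ℝ × ℝ) := by abel
      rw [← this, ht2, ht0, sub_smul]
    have f1 := congrArg Prod.fst e1
    have f2 := congrArg Prod.snd e1
    have g1 := congrArg Prod.fst e2
    have g2 := congrArg Prod.snd e2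
    simp only [psmul_fst, psmul_snd, psub_fst, psub_snd] at f1 f2 g1 g2
    -- (t1-t0)(b-a) = (ε/2, 0), (t2-t0)(b-a) = (0, ε/2): impossible
    have hε2 : (0:ℝ) < ε/2 := by linarith
    nlinarith [f1, f2, g1, g2, hε2]
  have hp0 : 0 < p := by omega
  set v : Fin p → ℝ × ℝ := fun i => l.get i with hv'
  have hvV : ∀ i, v i ∈ V := fun i => (hlmem _).1 (l.get_mem i)
  have hvne' : ∀ i, v i - O ≠ 0 := fun i => hvne _ (hvV i)
  have hviK : ∀ i, v i ∈ K := fun i => hVK (hvV i)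
  have hsorted : ∀ i j : Fin p, i < j → slt (v i - O) (v j - O) := by
    rw [List.pairwise_iff_get] at hlp
    exact fun i j h => hlp i j h
  have hvinj : ∀ i j : Fin p, v i = v j → i = j := by
    intro i j h
    exact (List.Nodup.get_inj_iff hlnd).1 h
  have hmemex : ∀ w ∈ V, ∃ i, v i = w := by
    intro w hw
    obtain ⟨i, hi⟩ := List.get_of_mem ((hlmem w).2 hw)
    exact ⟨i, hi⟩
  set nxt : Fin p → Fin p := fun i => ⟨(i.1 + 1) % p, Nat.mod_lt _ hp0⟩ with hnxt
  have hnxt_lt : ∀ (i : Fin p), i.1 < p - 1 → (nxt i).1 = i.1 + 1 := by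
    intro i hi
    show (i.1 + 1) % p = i.1 + 1
    exact Nat.mod_eq_of_lt (by omega)
  have hnxt_last : ∀ (i : Fin p), i.1 = p - 1 → (nxt i).1 = 0 := by
    intro i hi
    show (i.1 + 1) % p = 0
    rw [hi]
    have : p - 1 + 1 = p := by omega
    rw [this, Nat.mod_self]
  have hnxt_ne : ∀ i, nxt i ≠ i := by
    intro i h
    rcases lt_or_eq_of_le (Nat.le_of_lt_succ (by omega : i.1 < p - 1 + 1)) with hi | hi
    · have := hnxt_lt i hi
      rw [h] at this; omega
    · have := hnxt_last i hi
      rw [h] at this; omega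
  have hvne2 : ∀ i, v (nxt i) ≠ v i := fun i h => hnxt_ne i (hvinj _ _ h)
  -- step 2 : first vertex is in the upper half, last is in the lower half
  have hex_up : ∃ w ∈ V, hh (w - O) := by
    by_contra hno
    push_neg at hno
    refine no_halfplane hKM hO (d := ((1 : ℝ), (0 : ℝ))) (by simp [pne_zero_iff]) ?_
    intro w hw
    have h2 := not_hh_nonpos (hno w hw)
    show (1:ℝ) * (w - O).2 - 0 * (w - O).1 ≤ 0
    linarith
  have hex_low : ∃ w ∈ V, ¬ hh (w - O) := by
    by_contra hno
    push_neg at hno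
    refine no_halfplane hKM hO (d := ((-1 : ℝ), (0 : ℝ))) (by simp [pne_zero_iff]) ?_
    intro w hw
    have h2 := hh_nonneg (hno w hw)
    show (-1:ℝ) * (w - O).2 - 0 * (w - O).1 ≤ 0
    linarith
  have hup : hh (v ⟨0, hp0⟩ - O) := by
    by_contra hnot
    obtain ⟨w, hw, hwh⟩ := hex_up
    obtain ⟨j, rfl⟩ := hmemex w hw
    rcases Nat.eq_zero_or_pos j.1 with hj | hj
    · exact hnot (by rwa [show (⟨0, hp0⟩ : Fin p) = j from (Fin.ext hj).symm])
    · have := hsorted ⟨0, hp0⟩ j (by simpa [Fin.lt_def] using hj)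
      rcases this with ⟨h1, _⟩ | ⟨h1, _, _⟩ | ⟨_, h2, _⟩
      · exact hnot h1
      · exact hnot h1
      · exact h2 hwh
  have hlow : ¬ hh (v ⟨p - 1, by omega⟩ - O) := by
    intro hnot
    obtain ⟨w, hw, hwh⟩ := hex_low
    obtain ⟨j, rfl⟩ := hmemex w hw
    rcases eq_or_lt_of_le (Nat.le_of_lt_succ (by omega : j.1 < p - 1 + 1)) with hj | hj
    · exact hwh (by rwa [show j = (⟨p - 1, by omega⟩ : Fin p) from Fin.ext hj])
    · have := hsorted j ⟨p - 1, by omega⟩ (by simpa [Fin.lt_def] using hj)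
      rcases this with ⟨_, h2⟩ | ⟨h1, _, _⟩ | ⟨_, h2, _⟩
      · exact h2 hnot
      · exact hwh h1
      · exact h2 hnot
  -- step 3 : consecutive determinants are positive
  have hDpos : ∀ i, 0 < det2 (v i - O) (v (nxt i) - O) := by
    intro i
    by_contra hle0
    push_neg at hle0
    refine no_halfplane hKM hO (hvne' i) ?_
    intro w hw
    obtain ⟨j, rfl⟩ := hmemex w hw
    rcases eq_or_lt_of_le (Nat.le_of_lt_succ (by omega : i.1 < p - 1 + 1)) with hwrap | hnw
    · -- wrap case
      have hieq : i = ⟨p - 1, by omega⟩ := Fin.ext hwrap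
      have hneq : nxt i = ⟨0, hp0⟩ := Fin.ext (hnxt_last i hwrap)
      have ha : ¬ hh (v i - O) := by rw [hieq]; exact hlow
      have hb : hh (v (nxt i) - O) := by rw [hneq]; exact hup
      rcases eq_or_ne j i with rfl | hji
      · rw [det2_self]
      rcases eq_or_ne j (nxt i) with rfl | hjn
      · exact hle0
      have hj0 : j.1 ≠ 0 := fun h => hjn (by rw [hneq]; exact Fin.ext h)
      have hjlast : j.1 ≠ p - 1 := fun h => hji (by rw [hieq]; exact Fin.ext h)
      have hsl1 := hsorted (nxt i) j (by rw [Fin.lt_def, hnxt_last i hwrap]; omega)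
      have hsl2 := hsorted j i (by rw [Fin.lt_def, hwrap]; omega)
      rcases hsl2 with ⟨hwj, _⟩ | ⟨_, hcon, _⟩ | ⟨_, _, hd2⟩
      · rcases hsl1 with ⟨_, hno⟩ | ⟨_, _, hd1⟩ | ⟨hno, _, _⟩
        · exact absurd hwj hno
        · exact edge_high (hvne' i) ha hb hwj hle0 hd1
        · exact absurd hb hno
      · exact absurd hcon ha
      · have := det2_anti (v j - O) (v i - O); linarith
    · -- non-wrap case
      have hneq : (nxt i).1 = i.1 + 1 := hnxt_lt i hnw
      have hslt := hsorted i (nxt i) (by rw [Fin.lt_def, hneq]; omega)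
      rcases hslt with ⟨ha, hb⟩ | ⟨_, _, hd⟩ | ⟨_, _, hd⟩
      · rcases eq_or_ne j i with rfl | hji
        · rw [det2_self]
        rcases eq_or_ne j (nxt i) with rfl | hjn
        · exact hle0
        have hji' : j.1 ≠ i.1 := fun h => hji (Fin.ext h)
        have hjn' : j.1 ≠ i.1 + 1 := fun h => hjn (by rw [← hneq] at h; exact Fin.ext h)
        rcases lt_or_gt_of_ne hji' with hlt | hgt
        · have hsl := hsorted j i (by rw [Fin.lt_def]; omega)
          rcases hsl with ⟨_, hno⟩ | ⟨_, _, hd2⟩ | ⟨_, hno, _⟩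
          · exact absurd ha hno
          · have := det2_anti (v j - O) (v i - O); linarith
          · exact absurd ha hno
        · have hsl := hsorted (nxt i) j (by rw [Fin.lt_def, hneq]; omega)
          rcases hsl with ⟨hno, hwn⟩ | ⟨hno, _, _⟩ | ⟨_, hwn, hd1⟩
          · exact absurd hno hb
          · exact absurd hno hb
          · exact edge_low (hvne' (nxt i)) ha hb hwn hle0 hd1
      · linarith
      · linarith
  -- step 4 : no vertex strictly inside a sector
  have hGno : ∀ i : Fin p, ∀ w ∈ V, 0 < det2 (v i - O) (w - O) →
      0 < det2 (w - O) (v (nxt i) - O) → False := by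
    intro i w hw haw hwb
    obtain ⟨j, rfl⟩ := hmemex w hw
    have hji : j ≠ i := by rintro rfl; rw [det2_self] at haw; exact lt_irrefl _ haw
    have hjn : j ≠ nxt i := by rintro rfl; rw [det2_self] at hwb; exact lt_irrefl _ hwb
    rcases eq_or_lt_of_le (Nat.le_of_lt_succ (by omega : i.1 < p - 1 + 1)) with hwrap | hnw
    · -- wrap case
      have hieq : i = ⟨p - 1, by omega⟩ := Fin.ext hwrap
      have hneq : nxt i = ⟨0, hp0⟩ := Fin.ext (hnxt_last i hwrap)
      have hb : hh (v (nxt i) - O) := by rw [hneq]; exact hup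
      have hj0 : j.1 ≠ 0 := fun h => hjn (by rw [hneq]; exact Fin.ext h)
      have hjlast : j.1 ≠ p - 1 := fun h => hji (by rw [hieq]; exact Fin.ext h)
      by_cases hhw : hh (v j - O)
      · have hsl1 := hsorted (nxt i) j (by rw [Fin.lt_def, hnxt_last i hwrap]; omega)
        rcases hsl1 with ⟨_, hno⟩ | ⟨_, _, hd1⟩ | ⟨hno, _, _⟩
        · exact hno hhw
        · have := det2_anti (v j - O) (v (nxt i) - O); linarith
        · exact hno hb
      · have hsl2 := hsorted j i (by rw [Fin.lt_def, hwrap]; omega)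
        rcases hsl2 with ⟨h1, _⟩ | ⟨h1, _, _⟩ | ⟨_, _, hd2⟩
        · exact hhw h1
        · exact hhw h1
        · have := det2_anti (v j - O) (v i - O); linarith
    · -- non-wrap case
      have hneq : (nxt i).1 = i.1 + 1 := hnxt_lt i hnw
      have hslt := hsorted i (nxt i) (by rw [Fin.lt_def, hneq]; omega)
      have hji' : j.1 ≠ i.1 := fun h => hji (Fin.ext h)
      have hjn' : j.1 ≠ i.1 + 1 := fun h => hjn (by rw [← hneq] at h; exact Fin.ext h)
      rcases lt_or_gt_of_ne hji' with hlt | hgt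
      · have hsl := hsorted j i (by rw [Fin.lt_def]; omega)
        rcases hsl with ⟨hwj, hai⟩ | ⟨_, _, hd2⟩ | ⟨_, _, hd2⟩
        · rcases hslt with ⟨hcon, _⟩ | ⟨hcon, _, _⟩ | ⟨_, hbn, hd⟩
          · exact hai hcon
          · exact hai hcon
          · exact caseG1 (hvne' i) (hvne' (nxt i)) hai hbn hwj hd haw hwb
        · have := det2_anti (v j - O) (v i - O); linarith
        · have := det2_anti (v j - O) (v i - O); linarith
      · have hsl := hsorted (nxt i) j (by rw [Fin.lt_def, hneq]; omega)
        rcases hsl with ⟨hbh, hwn⟩ | ⟨_, _, hd1⟩ | ⟨_, _, hd1⟩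
        · rcases hslt with ⟨_, hbn⟩ | ⟨hah, hb2, hd⟩ | ⟨_, hbn, _⟩
          · exact hbn hbh
          · exact caseG2 (hvne _ hw) hah hb2 hwn hd haw hwb
          · exact hbn hbh
        · have := det2_anti (v j - O) (v (nxt i) - O); linarith
        · have := det2_anti (v j - O) (v (nxt i) - O); linarith
  -- step 5 : edges support V, then K
  have hsuppV : ∀ i : Fin p, ∀ w ∈ V, 0 ≤ det2 (v (nxt i) - v i) (w - v i) := by
    intro i w hw
    by_contra hneg
    push_neg at hneg
    have hDab := hDpos i
    have hba : v (nxt i) - v i ≠ 0 := sub_ne_zero.2 (hvne2 i)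
    have hfO : det2 (v (nxt i) - v i) (O - v i) = det2 (v i - O) (v (nxt i) - O) := by
      simp only [det2, psub_fst, psub_snd]; ring
    have hfO_pos : 0 < det2 (v (nxt i) - v i) (O - v i) := by rw [hfO]; exact hDab
    set fO := det2 (v (nxt i) - v i) (O - v i) with hfO'
    set fw := det2 (v (nxt i) - v i) (w - v i) with hfw'
    set s := fO / (fO - fw) with hs
    have hs0 : 0 < s := div_pos hfO_pos (by linarith)
    have hs1 : s < 1 := by rw [hs, div_lt_one (by linarith)]; linarith
    set z := O + s • (w - O) with hz
    have hzK : z ∈ K := by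
      have hm := hconv hOK (hVK hw) (by linarith : (0:ℝ) ≤ 1 - s) hs0.le (by ring)
      have he : (1 - s) • O + s • w = z := by rw [hz]; module
      rwa [he] at hm
    have hzO : z - O = s • (w - O) := by rw [hz]; abel
    have hd0 : fO - fw ≠ 0 := ne_of_gt (by linarith)
    have hfz : det2 (v (nxt i) - v i) (z - v i) = 0 := by
      have hexp : det2 (v (nxt i) - v i) (z - v i) = (1 - s) * fO + s * fw := by
        rw [hfO', hfw', hz]
        simp only [det2, psub_fst, psub_snd, padd_fst, padd_snd, psmul_fst, psmul_snd]
        ring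
      rw [hexp, hs]
      field_simp
      ring
    obtain ⟨t, htz⟩ := det2_zero_iff hba hfz
    have hzeq : z = v i + t • (v (nxt i) - v i) := by rw [← htz]; abel
    rcases lt_trichotomy t 0 with ht | ht | ht
    · -- v i strictly between z and v (nxt i)
      have hseg : v i ∈ openSegment ℝ z (v (nxt i)) := by
        have h1t : (0:ℝ) < 1 - t := by linarith
        refine ⟨1/(1-t), -t/(1-t), one_div_pos.2 h1t, div_pos (by linarith) h1t, ?_, ?_⟩
        · field_simp
          ring
        · rw [hzeq]
          match_scalars <;> (field_simp; try ring)
      have := ((mem_extremePoints.1 (hvV i)).2 _ hzK _ (hviK (nxt i)) hseg).2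
      exact hvne2 i this
    · -- z = v i, so v i strictly between O and w
      have hza : z = v i := by rw [hzeq, ht, zero_smul, add_zero]
      have hseg : v i ∈ openSegment ℝ O w := by
        refine ⟨1 - s, s, by linarith, hs0, by ring, ?_⟩
        rw [← hza, hz]; module
      have := ((mem_extremePoints.1 (hvV i)).2 _ hOK _ (hVK hw) hseg).1
      exact (hvne _ (hvV i)) (by rw [← this]; simp)
    · rcases lt_trichotomy t 1 with ht1 | ht1 | ht1
      · -- 0 < t < 1 : contradiction with hGno
        have e0 : det2 (v i - O) (z - O) = t * det2 (v i - O) (v (nxt i) - O) := by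
          have e : z - O = t • (v (nxt i) - v i) + (v i - O) := by rw [hzeq]; abel
          rw [e, det2_add_right, det2_smul_right, det2_self, add_zero]
          have e2 : v (nxt i) - v i = (v (nxt i) - O) - (v i - O) := by abel
          rw [e2, det2_sub_right, det2_self, sub_zero]
        have e1 : det2 (z - O) (v (nxt i) - O) = (1 - t) * det2 (v i - O) (v (nxt i) - O) := by
          have e : z - O = t • (v (nxt i) - O) + (1 - t) • (v i - O) := by
            rw [hzeq]; module
          rw [e, det2_add_left, det2_smul_left, det2_smul_left, det2_self]
          ring
        have haw : 0 < det2 (v i - O) (w - O) := by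
          have e2 : det2 (v i - O) (z - O) = s * det2 (v i - O) (w - O) := by
            rw [hzO, det2_smul_right]
          by_contra hle; push_neg at hle
          nlinarith [mul_nonpos_of_nonneg_of_nonpos hs0.le hle, mul_pos ht hDab]
        have hwb : 0 < det2 (w - O) (v (nxt i) - O) := by
          have e2 : det2 (z - O) (v (nxt i) - O) = s * det2 (w - O) (v (nxt i) - O) := by
            rw [hzO, det2_smul_left]
          by_contra hle; push_neg at hle
          nlinarith [mul_nonpos_of_nonneg_of_nonpos hs0.le hle,
            mul_pos (by linarith : (0:ℝ) < 1 - t) hDab]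
        exact hGno i w hw haw hwb
      · -- t = 1 : z = v (nxt i), strictly between O and w
        have hzb : z = v (nxt i) := by rw [hzeq, ht1, one_smul]; abel
        have hseg : v (nxt i) ∈ openSegment ℝ O w := by
          refine ⟨1 - s, s, by linarith, hs0, by ring, ?_⟩
          rw [← hzb, hz]; module
        have := ((mem_extremePoints.1 (hvV (nxt i))).2 _ hOK _ (hVK hw) hseg).1
        exact (hvne _ (hvV (nxt i))) (by rw [← this]; simp)
      · -- t > 1 : v (nxt i) strictly between v i and z
        have hseg : v (nxt i) ∈ openSegment ℝ (v i) z := by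
          refine ⟨1 - 1/t, 1/t, ?_, one_div_pos.2 (by linarith), by ring, ?_⟩
          · have : 1/t < 1 := by rw [div_lt_one (by linarith)]; linarith
            linarith
          · rw [hzeq]
            match_scalars <;> (field_simp; try ring)
        have := ((mem_extremePoints.1 (hvV (nxt i))).2 _ (hviK i) _ hzK hseg).1
        exact hvne2 i this.symm
  have hsupp : ∀ i : Fin p, ∀ x ∈ K, 0 ≤ det2 (v (nxt i) - v i) (x - v i) := by
    intro i x hx
    have hsub : K ⊆ {y : ℝ × ℝ | det2 (-(v (nxt i) - v i)) (y - v i) ≤ 0} := by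
      rw [← hKM]
      refine closure_minimal (convexHull_min ?_ (halfplane_convex _ _)) (halfplane_closed _ _)
      intro w hw
      rw [Set.mem_setOf_eq, det2_neg_left]
      linarith [hsuppV i w hw]
    have := hsub hx
    rw [Set.mem_setOf_eq, det2_neg_left] at this
    linarith
  -- step 6 : strict positivity for other vertices
  have hstrict : ∀ i : Fin p, ∀ w ∈ V, w ≠ v i → w ≠ v (nxt i) →
      0 < det2 (v (nxt i) - v i) (w - v i) := by
    intro i w hw hwa hwb
    rcases eq_or_lt_of_le (hsuppV i w hw) with heq | hlt
    · exfalso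
      obtain ⟨t, htw⟩ := det2_zero_iff (sub_ne_zero.2 (hvne2 i)) heq.symm
      have hweq : w = v i + t • (v (nxt i) - v i) := by rw [← htw]; abel
      rcases lt_trichotomy t 0 with ht | ht | ht
      · have hseg : v i ∈ openSegment ℝ w (v (nxt i)) := by
          have h1t : (0:ℝ) < 1 - t := by linarith
          refine ⟨1/(1-t), -t/(1-t), one_div_pos.2 h1t, div_pos (by linarith) h1t, ?_, ?_⟩
          · field_simp
            ring
          · rw [hweq]
            match_scalars <;> (field_simp; try ring)
        exact hwa ((mem_extremePoints.1 (hvV i)).2 _ (hVK hw) _ (hviK (nxt i)) hseg).1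
      · exact hwa (by rw [hweq, ht, zero_smul, add_zero])
      · rcases lt_trichotomy t 1 with ht1 | ht1 | ht1
        · have hseg : w ∈ openSegment ℝ (v i) (v (nxt i)) := by
            refine ⟨1 - t, t, by linarith, ht, by ring, ?_⟩
            rw [hweq]; module
          exact hwa ((mem_extremePoints.1 hw).2 _ (hviK i) _ (hviK (nxt i)) hseg).1.symm
        · exact hwb (by rw [hweq, ht1, one_smul]; abel)
        · have hseg : v (nxt i) ∈ openSegment ℝ (v i) w := by
            refine ⟨1 - 1/t, 1/t, ?_, one_div_pos.2 (by linarith), by ring, ?_⟩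
            · have : 1/t < 1 := by rw [div_lt_one (by linarith)]; linarith
              linarith
            · rw [hweq]
              match_scalars <;> (field_simp; try ring)
          exact hwb ((mem_extremePoints.1 (hvV (nxt i))).2 _ (hviK i) _ (hVK hw) hseg).2
    · exact hlt
  -- step 7 : K ∩ edge line = edge segment
  have hlineK : ∀ i : Fin p, ∀ x ∈ K, det2 (v (nxt i) - v i) (x - v i) = 0 →
      x ∈ segment ℝ (v i) (v (nxt i)) := by
    intro i x hx hfx
    obtain ⟨t, htx⟩ := det2_zero_iff (sub_ne_zero.2 (hvne2 i)) hfx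
    have hxeq : x = v i + t • (v (nxt i) - v i) := by rw [← htx]; abel
    rcases le_or_gt 0 t with ht0 | ht0
    · rcases le_or_gt t 1 with ht1 | ht1
      · refine ⟨1 - t, t, by linarith, ht0, by ring, ?_⟩
        rw [hxeq]; module
      · exfalso
        have hseg : v (nxt i) ∈ openSegment ℝ (v i) x := by
          refine ⟨1 - 1/t, 1/t, ?_, one_div_pos.2 (by linarith), by ring, ?_⟩
          · have : 1/t < 1 := by rw [div_lt_one (by linarith)]; linarith
            linarith
          · rw [hxeq]
            match_scalars <;> (field_simp; try ring)
        exact hvne2 i ((mem_extremePoints.1 (hvV (nxt i))).2 _ (hviK i) _ hx hseg).1.symm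
    · exfalso
      have hseg : v i ∈ openSegment ℝ x (v (nxt i)) := by
        have h1t : (0:ℝ) < 1 - t := by linarith
        refine ⟨1/(1-t), -t/(1-t), one_div_pos.2 h1t, div_pos (by linarith) h1t, ?_, ?_⟩
        · field_simp
          ring
        · rw [hxeq]
          match_scalars <;> (field_simp; try ring)
      exact hvne2 i ((mem_extremePoints.1 (hvV i)).2 _ hx _ (hviK (nxt i)) hseg).2
  -- step 8 : each edge is contained in the frontier
  have hedge_front : ∀ i : Fin p, segment ℝ (v i) (v (nxt i)) ⊆ frontier K := by
    intro i x hxseg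
    have hxK : x ∈ K := hconv.segment_subset (hviK i) (hviK (nxt i)) hxseg
    rw [hcl.frontier_eq]
    refine ⟨hxK, fun hint => ?_⟩
    obtain ⟨sa, sb, hsa, hsb, hsum, hxeq⟩ := hxseg
    have hfx : det2 (v (nxt i) - v i) (x - v i) = 0 := by
      rw [← hxeq]
      have hsa' : sa = 1 - sb := by linarith
      have e : sa • v i + sb • v (nxt i) - v i = sb • (v (nxt i) - v i) := by
        rw [hsa']; module
      rw [e, det2_smul_right, det2_self, mul_zero]
    exact interior_strict (sub_ne_zero.2 (hvne2 i)) (hsupp i) hfx hint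
  -- step 9 : the frontier is contained in the union of edges
  have hfront_edge : ∀ x ∈ frontier K, ∃ i : Fin p, x ∈ segment ℝ (v i) (v (nxt i)) := by
    intro x hx
    rw [hcl.frontier_eq] at hx
    obtain ⟨hxK, hxint⟩ := hx
    have hxO : x - O ≠ 0 := by
      intro h
      rw [sub_eq_zero] at h
      exact hxint (h ▸ hO)
    by_cases hpar : ∃ j : Fin p, ∃ t : ℝ, 0 < t ∧ x - O = t • (v j - O)
    · obtain ⟨j, t, ht, htx⟩ := hpar
      have hxO' : x = O + t • (v j - O) := by rw [← htx]; abel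
      have hfx : det2 (v (nxt j) - v j) (x - v j)
          = (1 - t) * det2 (v j - O) (v (nxt j) - O) := by
        have e : x - v j = (t - 1) • (v j - O) := by rw [hxO']; module
        rw [e, det2_smul_right]
        have e2 : det2 (v (nxt j) - v j) (v j - O) = - det2 (v j - O) (v (nxt j) - O) := by
          simp only [det2, psub_fst, psub_snd]; ring
        rw [e2]; ring
      have ht1 : t ≤ 1 := by
        have hge := hsupp j x hxK
        rw [hfx] at hge
        nlinarith [hDpos j]
      rcases lt_or_eq_of_le ht1 with htlt | hteq
      · exfalso
        have hmem := hconv.combo_interior_self_mem_interior hO (hviK j)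
          (by linarith : (0:ℝ) < 1 - t) ht.le (by ring)
        have he : (1 - t) • O + t • v j = x := by rw [hxO']; module
        rw [he] at hmem
        exact hxint hmem
      · refine ⟨j, ?_⟩
        have : x = v j := by rw [hxO', hteq, one_smul]; abel
        rw [this]
        exact left_mem_segment ℝ _ _
    · push_neg at hpar
      have htri : ∀ j : Fin p, slt (v j - O) (x - O) ∨ slt (x - O) (v j - O) :=
        fun j => slt_trichotomy (hvne' j) hxO (fun t ht => hpar j t ht)
      have hsector : ∃ i : Fin p, 0 ≤ det2 (v i - O) (x - O) ∧
          0 ≤ det2 (x - O) (v (nxt i) - O) := by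
        set S := Finset.univ.filter (fun j : Fin p => slt (v j - O) (x - O)) with hS
        rcases S.eq_empty_or_nonempty with hSe | hSne
        · have h0 : slt (x - O) (v ⟨0, hp0⟩ - O) := by
            rcases htri ⟨0, hp0⟩ with h | h
            · exfalso
              have hmem : (⟨0, hp0⟩ : Fin p) ∈ S := Finset.mem_filter.2 ⟨Finset.mem_univ _, h⟩
              rw [hSe] at hmem
              exact absurd hmem (Finset.notMem_empty _)
            · exact h
          have hxhd : hh (x - O) ∧ 0 < det2 (x - O) (v ⟨0, hp0⟩ - O) := by
            rcases h0 with ⟨hxh, hno⟩ | ⟨hxh, _, hd⟩ | ⟨_, hno, _⟩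
            · exact absurd hup hno
            · exact ⟨hxh, hd⟩
            · exact absurd hup hno
          obtain ⟨hxh, hd⟩ := hxhd
          have hnn : nxt ⟨p - 1, by omega⟩ = ⟨0, hp0⟩ := Fin.ext (hnxt_last _ rfl)
          have hDw : 0 < det2 (v ⟨p - 1, by omega⟩ - O) (v ⟨0, hp0⟩ - O) := by
            have := hDpos ⟨p - 1, by omega⟩
            rwa [hnn] at this
          refine ⟨⟨p - 1, by omega⟩, ?_, ?_⟩
          · exact sectorW1 hlow hup hxh hDw hd
          · rw [hnn]
            exact hd.le
        · set i := S.max' hSne with hi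
          have hiS : i ∈ S := S.max'_mem hSne
          have hilt : slt (v i - O) (x - O) := (Finset.mem_filter.1 hiS).2
          rcases eq_or_lt_of_le (Nat.le_of_lt_succ (by omega : i.1 < p - 1 + 1)) with hwrap | hnw
          · -- i is the last index : wrap sector
            have hieq : i = ⟨p - 1, by omega⟩ := Fin.ext hwrap
            have hia : ¬ hh (v i - O) := by rw [hieq]; exact hlow
            have hnn : nxt i = ⟨0, hp0⟩ := Fin.ext (hnxt_last _ hwrap)
            have hxld : ¬ hh (x - O) ∧ 0 < det2 (v i - O) (x - O) := by
              rcases hilt with ⟨h1, _⟩ | ⟨h1, _, _⟩ | ⟨_, h2, hd⟩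
              · exact absurd h1 hia
              · exact absurd h1 hia
              · exact ⟨h2, hd⟩
            obtain ⟨hxl, hd⟩ := hxld
            refine ⟨i, hd.le, ?_⟩
            rw [hnn]
            have hDw : 0 < det2 (v i - O) (v ⟨0, hp0⟩ - O) := by
              have := hDpos i
              rwa [hnn] at this
            exact sectorW2 (hvne' i) hia hup hxl hDw hd
          · -- i is not the last index
            have hnn : (nxt i).1 = i.1 + 1 := hnxt_lt i hnw
            have hnotS : nxt i ∉ S := by
              intro hmem
              have hle := S.le_max' (nxt i) hmem
              rw [← hi] at hle
              rw [Fin.le_def, hnn] at hle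
              omega
            have hxn : slt (x - O) (v (nxt i) - O) := by
              rcases htri (nxt i) with h | h
              · exact absurd (Finset.mem_filter.2 ⟨Finset.mem_univ (nxt i), h⟩) hnotS
              · exact h
            rcases hilt with ⟨hia, hxl⟩ | ⟨hia, hxh, hd1⟩ | ⟨hia, hxl, hd1⟩
            · -- v i upper, x lower
              rcases hxn with ⟨hxh', _⟩ | ⟨hxh', _, _⟩ | ⟨_, hbl, hd2⟩
              · exact absurd hxh' hxl
              · exact absurd hxh' hxl
              · exact ⟨i, sectorM2 (hvne' (nxt i)) hia hxl hbl (hDpos i) hd2, hd2.le⟩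
            · -- v i upper, x upper
              refine ⟨i, hd1.le, ?_⟩
              rcases hxn with ⟨_, hbl⟩ | ⟨_, _, hd2⟩ | ⟨hxl, _, _⟩
              · exact sectorM1 hia hxh hbl (hDpos i) hd1
              · exact hd2.le
              · exact absurd hxh hxl
            · -- v i lower, x lower
              refine ⟨i, hd1.le, ?_⟩
              rcases hxn with ⟨hc, _⟩ | ⟨hc, _, _⟩ | ⟨_, _, hd2⟩
              · exact absurd hc hxl
              · exact absurd hc hxl
              · exact hd2.le
      obtain ⟨i, hs1, hs2⟩ := hsector
      have hs1' : 0 < det2 (v i - O) (x - O) := by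
        rcases eq_or_lt_of_le hs1 with heq | h
        · exfalso
          obtain ⟨t, htx⟩ := det2_zero_iff (hvne' i) heq.symm
          rcases lt_trichotomy t 0 with ht | ht | ht
          · have he : det2 (x - O) (v (nxt i) - O) = t * det2 (v i - O) (v (nxt i) - O) := by
              rw [htx, det2_smul_left]
            nlinarith [hDpos i, mul_neg_of_neg_of_pos ht (hDpos i)]
          · exact hxO (by rw [htx, ht, zero_smul])
          · exact hpar i t ht htx
        · exact h
      have hs2' : 0 < det2 (x - O) (v (nxt i) - O) := by
        rcases eq_or_lt_of_le hs2 with heq | h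
        · exfalso
          have h0 : det2 (v (nxt i) - O) (x - O) = 0 := by
            have hA := det2_anti (v (nxt i) - O) (x - O)
            rw [hA, ← heq]
            ring
          obtain ⟨t, htx⟩ := det2_zero_iff (hvne' (nxt i)) h0
          rcases le_or_gt t 0 with ht | ht
          · have he : det2 (v i - O) (x - O) = t * det2 (v i - O) (v (nxt i) - O) := by
              rw [htx, det2_smul_right]
            nlinarith [mul_nonpos_of_nonpos_of_nonneg ht (hDpos i).le]
          · exact hpar (nxt i) t ht htx
        · exact h
      have hf0 := hsupp i x hxK
      rcases eq_or_lt_of_le hf0 with heq | hlt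
      · exact ⟨i, hlineK i x hxK heq.symm⟩
      · exact absurd (triangle_mem hconv hOK (hviK i) (hviK (nxt i)) (hDpos i) hs1' hs2' hlt)
          hxint
  -- assemble the CPD
  set A : ℤ → ℝ × ℝ := fun z => v ⟨(z % (p : ℤ)).toNat % p, Nat.mod_lt _ hp0⟩ with hA
  have hA1 : ∀ (k : ℕ) (hk : k < p), A (k : ℤ) = v ⟨k, hk⟩ := by
    intro k hk
    show v ⟨((k : ℤ) % (p : ℤ)).toNat % p, Nat.mod_lt _ hp0⟩ = v ⟨k, hk⟩
    refine congrArg v (Fin.ext ?_)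
    show ((k : ℤ) % (p : ℤ)).toNat % p = k
    have h1 : (k : ℤ) % (p : ℤ) = (k : ℤ) :=
      Int.emod_eq_of_lt (by positivity) (by exact_mod_cast hk)
    rw [h1, Int.toNat_natCast]
    exact Nat.mod_eq_of_lt hk
  have hA2 : ∀ (k : ℕ) (hk : k < p), A ((k : ℤ) + 1) = v (nxt ⟨k, hk⟩) := by
    intro k hk
    show v ⟨(((k : ℤ) + 1) % (p : ℤ)).toNat % p, Nat.mod_lt _ hp0⟩ = v ⟨(k + 1) % p, Nat.mod_lt _ hp0⟩
    refine congrArg v (Fin.ext ?_)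
    show (((k : ℤ) + 1) % (p : ℤ)).toNat % p = (k + 1) % p
    have h1 : ((k : ℤ) + 1) = ((k + 1 : ℕ) : ℤ) := by push_cast; ring
    rw [h1, ← Int.natCast_mod, Int.toNat_natCast]
    exact Nat.mod_mod_of_dvd _ dvd_rfl
  have hAper : ∀ z : ℤ, A (z + (p : ℤ)) = A z := by
    intro z
    show v ⟨((z + (p : ℤ)) % (p : ℤ)).toNat % p, Nat.mod_lt _ hp0⟩
      = v ⟨(z % (p : ℤ)).toNat % p, Nat.mod_lt _ hp0⟩
    refine congrArg v (Fin.ext ?_)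
    show ((z + (p : ℤ)) % (p : ℤ)).toNat % p = (z % (p : ℤ)).toNat % p
    have h1 : (z + (p : ℤ)) % (p : ℤ) = z % (p : ℤ) := by
      have := Int.add_mul_emod_self_left (a := z) (b := (p : ℤ)) (c := 1)
      rw [mul_one] at this
      exact this
    rw [h1]
  refine ⟨p, hp3, A, ⟨hp3, hAper, ?_⟩, ?_⟩
  · -- CPD determinant condition
    intro p' q h0 h1 h2 h3 hne1 hne2
    have hkp : p' = ((p'.toNat : ℕ) : ℤ) := (Int.toNat_of_nonneg h0).symm
    have hk : p'.toNat < p := by omega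
    have hmq : q = ((q.toNat : ℕ) : ℤ) := (Int.toNat_of_nonneg (by linarith)).symm
    have hm : q.toNat < p := by omega
    have hm1 : 1 ≤ q.toNat := by omega
    rw [hkp, hmq, hA1 p'.toNat hk, hA2 p'.toNat hk, hA1 q.toNat hm]
    apply hstrict ⟨p'.toNat, hk⟩ _ (hvV ⟨q.toNat, hm⟩)
    · intro h
      have := hvinj _ _ h
      rw [Fin.mk.injEq] at this
      omega
    · intro h
      have heq := hvinj _ _ h
      have hval : q.toNat = (p'.toNat + 1) % p := Fin.ext_iff.1 heq
      rcases eq_or_lt_of_le (Nat.le_of_lt_succ (by omega : p'.toNat < p - 1 + 1)) with hj | hj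
      · have hmod : (p'.toNat + 1) % p = 0 := by
          rw [hj]
          have h5 : p - 1 + 1 = p := by omega
          rw [h5, Nat.mod_self]
        omega
      · have hmod : (p'.toNat + 1) % p = p'.toNat + 1 := Nat.mod_eq_of_lt (by omega)
        omega
  · -- frontier equality
    ext x
    constructor
    · intro hx
      obtain ⟨i, hseg⟩ := hfront_edge x hx
      have : x ∈ segment ℝ (A (i.1 : ℤ)) (A ((i.1 : ℤ) + 1)) := by
        rw [hA1 i.1 i.isLt, hA2 i.1 i.isLt]
        rw [Fin.eta]
        exact hseg
      refine Set.mem_biUnion (Finset.mem_range.2 i.isLt) this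
    · intro hx
      simp only [Polyline, Set.mem_iUnion] at hx
      obtain ⟨k, hk, hseg⟩ := hx
      rw [Finset.mem_range] at hk
      rw [hA1 k hk, hA2 k hk] at hseg
      exact hedge_front ⟨k, hk⟩ hseg

end PCaux

/-- Every convex polygon has boundary the polygonal line of some CPD. -/
theorem PC_boundary_is_CPD (K : Set (ℝ × ℝ)) (hK : IsPC K) :
    ∃ p : ℕ, 3 ≤ p ∧ ∃ A : ℤ → ℝ × ℝ, IsCPD p A ∧
      frontier K = Polyline p A := by
  obtain ⟨⟨X, hXfin, hXhp, hKX⟩, hKbdd, hKint⟩ := hK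
  obtain ⟨F, hF0, hFrep⟩ := PCaux.exists_Frep X hXfin hXhp
  have hKF : K = {x : ℝ × ℝ | ∀ t ∈ F, x ∈ PCaux.hpSet t} := by rw [hKX, hFrep]
  have hcl : IsClosed K := hKF ▸ PCaux.Frep_closed F
  have hconv : Convex ℝ K := hKF ▸ PCaux.Frep_convex F
  have hcomp : IsCompact K := Metric.isCompact_of_isClosed_isBounded hcl hKbdd
  have hVfin := PCaux.extremePoints_finite K F hF0 hKF
  have hKM := closure_convexHull_extremePoints hcomp hconv
  obtain ⟨O, hO⟩ := hKint
  exact PCaux.main hconv hcl hO hVfin hKM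
end
end

section
/- Let (A_k)_{k∈ℤ} be a CPD with p vertices. Then the union of the segments [A_k, A_{k+1}], 0 ≤ k ≤ p-1, is the frontier of a bounded convex set with nonempty interior, namely the convex hull of {A_0, …, A_{p-1}}, which is an intersection of the p closed half-planes {M : det(A_{k+1} - A_k, M - A_k) ≥ 0}. -/
noncomputable section

lemma det2_plucker (a b c d : ℝ × ℝ) :
    det2 a b * det2 c d - det2 a c * det2 b d + det2 a d * det2 b c = 0 := by
  simp only [det2]; ring

lemma det2_cycle (a b c : ℝ × ℝ) : det2 (b - a) (c - a) = det2 (c - b) (a - b) := by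
  simp only [det2, Prod.fst_sub, Prod.snd_sub]; ring

lemma det2_trans {c u v w : ℝ × ℝ} (h1 : 0 < det2 c u) (h2 : 0 < det2 c v)
    (h3 : 0 < det2 c w) (h4 : 0 < det2 u v) (h5 : 0 < det2 v w) :
    0 < det2 u w := by
  nlinarith [det2_plucker c u v w, mul_pos h1 h5, mul_pos h3 h4]

lemma det2_antisymm (u v : ℝ × ℝ) : det2 u v = - det2 v u := by
  simp only [det2]; ring

lemma det2_shift (a b c : ℝ × ℝ) :
    det2 (b - a) (c - a) = det2 a b + det2 b c - det2 a c := by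
  simp only [det2, Prod.fst_sub, Prod.snd_sub]; ring

lemma det2_key (A : ℤ → ℝ × ℝ) (x y z : ℤ) :
    det2 (A y - A x) (A z - A x) =
      det2 (A x - A 1) (A y - A 1) + det2 (A y - A 1) (A z - A 1)
        - det2 (A x - A 1) (A z - A 1) := by
  rw [← det2_shift]
  congr 1 <;> exact (sub_sub_sub_cancel_right _ _ _).symm

lemma key_ineq {AB AE AX BE BX EX : ℝ} (hPl : AB * EX - AE * BX + AX * BE = 0)
    (hAB : 0 < AB) (hAE : 0 < AE) (hAX : 0 < AX) (hBE : 0 < BE) (hBX : 0 < BX)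
    (hEX : 0 < EX) (hE1 : 0 < AB + BE - AE) (hE2 : 0 < AE + EX - AX) :
    0 < AB + BX - AX := by
  by_contra h
  push_neg at h
  have h3 : AX * (AB + BE) < AE * (AB + BX) := by nlinarith [mul_pos hAB hE2]
  nlinarith [mul_pos (add_pos hAB hBE) hAX]

lemma det2_zero_right (u : ℝ × ℝ) : det2 u 0 = 0 := by simp [det2]

lemma det2_self (u : ℝ × ℝ) : det2 u u = 0 := by simp [det2]; ring

lemma det2_sub_self (u v : ℝ × ℝ) : det2 u (v - u) = det2 u v := by
  simp only [det2, Prod.fst_sub, Prod.snd_sub]; ring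

lemma det2_smul_right (t : ℝ) (u v : ℝ × ℝ) : det2 u (t • v) = t * det2 u v := by
  simp only [det2, Prod.smul_fst, Prod.smul_snd, smul_eq_mul]; ring

lemma det2_flip (a b x : ℝ × ℝ) : det2 (b - a) (x - a) = - det2 (a - b) (x - b) := by
  simp only [det2, Prod.fst_sub, Prod.snd_sub]; ring

lemma det2_param (u w : ℝ × ℝ) (t : ℝ) :
    det2 (u - w) (t • u - w) = (1 - t) * det2 w u := by
  simp only [det2, Prod.fst_sub, Prod.snd_sub, Prod.smul_fst, Prod.smul_snd,
    smul_eq_mul]; ring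

lemma det2_add_smul (u x y : ℝ × ℝ) (t : ℝ) :
    det2 u (x + t • y) = det2 u x + t * det2 u y := by
  simp only [det2, Prod.fst_add, Prod.snd_add, Prod.smul_fst, Prod.smul_snd,
    smul_eq_mul]; ring

lemma det2_self_add_smul (u v : ℝ × ℝ) (t : ℝ) :
    det2 u (u + t • v) = t * det2 u v := by
  simp only [det2, Prod.fst_add, Prod.snd_add, Prod.smul_fst, Prod.smul_snd,
    smul_eq_mul]; ring

lemma det2_combo (e a x y : ℝ × ℝ) (s t : ℝ) (hst : s + t = 1) :
    det2 e (s • x + t • y - a) = s * det2 e (x - a) + t * det2 e (y - a) := by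
  have ht : t = 1 - s := by linarith
  subst ht
  simp only [det2, Prod.fst_add, Prod.snd_add, Prod.fst_sub, Prod.snd_sub,
    Prod.smul_fst, Prod.smul_snd, smul_eq_mul]; ring

lemma det2_centroid (e a x y z : ℝ × ℝ) :
    det2 e ((3:ℝ)⁻¹ • (x + y + z) - a) =
      (3:ℝ)⁻¹ * (det2 e (x - a) + det2 e (y - a) + det2 e (z - a)) := by
  simp only [det2, Prod.fst_add, Prod.snd_add, Prod.fst_sub, Prod.snd_sub,
    Prod.smul_fst, Prod.smul_snd, smul_eq_mul]; ring

lemma det2_zero_decomp {v w : ℝ × ℝ} (h : det2 v w = 0) (hv : v ≠ 0) :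
    ∃ t : ℝ, w = t • v := by
  rcases v with ⟨v1, v2⟩
  rcases w with ⟨w1, w2⟩
  simp only [det2] at h
  simp only [ne_eq, Prod.mk_eq_zero, not_and_or] at hv
  by_cases h1 : v1 = 0
  · have h2 : v2 ≠ 0 := by tauto
    refine ⟨w2 / v2, ?_⟩
    rw [Prod.smul_mk, Prod.mk.injEq, smul_eq_mul, smul_eq_mul]
    constructor <;> field_simp <;> nlinarith [h]
  · refine ⟨w1 / v1, ?_⟩
    rw [Prod.smul_mk, Prod.mk.injEq, smul_eq_mul, smul_eq_mul]
    constructor <;> field_simp <;> nlinarith [h]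

lemma det2_bary {u v : ℝ × ℝ} (m : ℝ × ℝ) (hD : det2 u v ≠ 0) :
    m = (det2 m v / det2 u v) • u + (det2 u m / det2 u v) • v := by
  rcases u with ⟨u1, u2⟩; rcases v with ⟨v1, v2⟩; rcases m with ⟨m1, m2⟩
  simp only [det2] at *
  rw [Prod.smul_mk, Prod.smul_mk, Prod.mk_add_mk, Prod.mk.injEq]
  simp only [smul_eq_mul]
  constructor <;> rw [div_mul_eq_mul_div, div_mul_eq_mul_div, ← add_div, eq_div_iff hD] <;> ring

section CPD
variable {p : ℕ} {A : ℤ → ℝ × ℝ}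
variable (hp3 : 3 ≤ p) (hper : ∀ k : ℤ, A (k + p) = A k)
variable (hH : ∀ q r : ℤ, 0 ≤ q → q ≤ (p : ℤ) - 1 → 1 ≤ r → r ≤ (p : ℤ) - 1 →
    r ≠ q → r ≠ q + 1 → 0 < det2 (A (q + 1) - A q) (A r - A q))

include hper in
lemma CPD_per : ∀ i : ℤ, A i = A (i % p) := by
  have key : ∀ m : ℤ, ∀ k : ℤ, A (k + m * p) = A k := by
    intro m
    induction m using Int.induction_on with
    | zero => simp
    | succ n ih => intro k; have := hper (k + n * p)
                   rw [show ((k:ℤ) + (n+1) * p) = k + n*p + p by ring, this, ih]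
    | pred n ih => intro k
                   have := hper (k + (-n-1) * p)
                   rw [show ((k:ℤ) + (-n-1) * p + p) = k + (-n) * p by ring] at this
                   rw [← this, ih]
  intro i
  conv_lhs => rw [← Int.emod_add_mul_ediv i p]
  rw [show (i % p + p * (i / p) : ℤ) = i % p + (i/p) * p by ring, key]

include hper in
lemma CPD_congr {i j : ℤ} (h : i % p = j % p) : A i = A j := by
  rw [CPD_per hper i, CPD_per hper j, h]

include hp3 hper hH in
lemma CPD_fan : ∀ i j : ℤ, 2 ≤ i → i < j → j ≤ (p:ℤ) →
    0 < det2 (A i - A 1) (A j - A 1) := by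
  have hp3' : (3:ℤ) ≤ (p:ℤ) := by exact_mod_cast hp3
  have hA0 : A (p:ℤ) = A 0 := CPD_congr hper (by simp)
  have hv2 : ∀ j : ℤ, 3 ≤ j → j ≤ (p:ℤ) → 0 < det2 (A 2 - A 1) (A j - A 1) := by
    intro j h3 hjp
    rcases lt_or_eq_of_le hjp with hlt | heq
    · have := hH 1 j (by norm_num) (by omega) (by omega) (by omega) (by omega) (by omega)
      norm_num at this; exact this
    · have := hH 0 2 (by norm_num) (by omega) (by norm_num) (by omega) (by omega) (by omega)
      norm_num at this
      rw [det2_cycle] at this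
      rw [heq, hA0]
      exact this
  have hcons : ∀ j : ℤ, 2 ≤ j → j ≤ (p:ℤ) - 1 →
      0 < det2 (A j - A 1) (A (j+1) - A 1) := by
    intro j h2 hj
    rw [det2_cycle]
    exact hH j 1 (by omega) hj (by omega) (by omega) (by omega) (by omega)
  intro i j h2 hij hjp
  rcases eq_or_lt_of_le h2 with h2' | h3
  · exact h2' ▸ hv2 j (by omega) hjp
  · have main : ∀ j : ℤ, i + 1 ≤ j → j ≤ (p:ℤ) → 0 < det2 (A i - A 1) (A j - A 1) := by
      refine Int.le_induction ?_ ?_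
      · intro hip; exact hcons i h2 (by omega)
      · intro n hn ih hnp
        exact det2_trans (hv2 i (by omega) (by omega)) (hv2 n (by omega) (by omega))
          (hv2 (n+1) (by omega) hnp) (ih (by omega)) (hcons n (by omega) (by omega))
    exact main j (by omega) hjp

include hp3 hper hH in
lemma CPD_T : ∀ q : ℤ, 1 ≤ q → q ≤ (p:ℤ) - 2 →
    0 < det2 (A (q+1) - A q) (A 0 - A q) := by
  have hp3' : (3:ℤ) ≤ (p:ℤ) := by exact_mod_cast hp3
  have hA0 : A (p:ℤ) = A 0 := CPD_congr hper (by simp)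
  intro q hq1 hq2
  rcases eq_or_lt_of_le hq1 with h1 | h1'
  · -- q = 1
    rw [← h1, ← hA0]
    have := CPD_fan hp3 hper hH 2 p le_rfl (by omega) le_rfl
    norm_num
    convert this using 3 <;> norm_num
  rcases eq_or_lt_of_le hq2 with h2 | h2'
  · -- q = p - 2
    have := hH ((p:ℤ)-1) ((p:ℤ)-2) (by omega) (by omega) (by omega) (by omega)
      (by omega) (by omega)
    rw [det2_cycle, det2_cycle] at this
    rw [show ((p:ℤ)-1+1) = (p:ℤ) by ring, hA0] at this
    rw [h2, show ((p:ℤ)-2+1) = (p:ℤ)-1 by ring]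
    exact this
  -- 2 ≤ q ≤ p - 3
  have hq2' : q ≤ (p:ℤ) - 3 := by omega
  have hq1' : 2 ≤ q := by omega
  have hAB := CPD_fan hp3 hper hH q (q+1) hq1' (by omega) (by omega)
  have hAE := CPD_fan hp3 hper hH q ((p:ℤ)-1) hq1' (by omega) (by omega)
  have hAX := CPD_fan hp3 hper hH q (p:ℤ) hq1' (by omega) (by omega)
  have hBE := CPD_fan hp3 hper hH (q+1) ((p:ℤ)-1) (by omega) (by omega) (by omega)
  have hBX := CPD_fan hp3 hper hH (q+1) (p:ℤ) (by omega) (by omega) (by omega)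
  have hEX := CPD_fan hp3 hper hH ((p:ℤ)-1) (p:ℤ) (by omega) (by omega) (by omega)
  have hE1 := hH q ((p:ℤ)-1) (by omega) (by omega) (by omega) (by omega) (by omega) (by omega)
  have hE2 := hH ((p:ℤ)-1) q (by omega) (by omega) (by omega) (by omega) (by omega) (by omega)
  rw [show ((p:ℤ)-1+1) = (p:ℤ) by ring] at hE2
  rw [det2_key] at hE1 hE2
  rw [← hA0, det2_key]
  have hPl := det2_plucker (A q - A 1) (A (q+1) - A 1) (A ((p:ℤ)-1) - A 1) (A (p:ℤ) - A 1)
  rw [det2_antisymm (A (p:ℤ) - A 1) (A q - A 1)] at hE2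
  rw [det2_antisymm (A ((p:ℤ)-1) - A 1) (A q - A 1)] at hE2
  have := key_ineq hPl hAB hAE hAX hBE hBX hEX (by linarith) (by linarith)
  linarith

include hp3 hper hH in
lemma CPD_weak : ∀ k j : ℤ, 0 ≤ det2 (A (k+1) - A k) (A j - A k) := by
  have hp3' : (3:ℤ) ≤ (p:ℤ) := by exact_mod_cast hp3
  have hppos : (0:ℤ) < (p:ℤ) := by omega
  have hpne : (p:ℤ) ≠ 0 := by omega
  have hA0 : A (p:ℤ) = A 0 := CPD_congr hper (by simp)
  have bdd : ∀ k j : ℤ, 0 ≤ k → k ≤ (p:ℤ)-1 → 0 ≤ j → j ≤ (p:ℤ)-1 →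
      0 ≤ det2 (A (k+1) - A k) (A j - A k) := by
    intro k j hk0 hk1 hj0 hj1
    rcases eq_or_ne j k with rfl | hjk
    · rw [sub_self, det2_zero_right]
    rcases eq_or_ne j (k+1) with rfl | hjk1
    · rw [det2_self]
    rcases eq_or_ne j 0 with rfl | hj
    · rcases eq_or_ne k ((p:ℤ)-1) with rfl | hkp
      · rw [show ((p:ℤ)-1+1) = (p:ℤ) by ring, hA0, det2_self]
      · exact le_of_lt (CPD_T hp3 hper hH k (by omega) (by omega))
    · exact le_of_lt (hH k j hk0 hk1 (by omega) hj1 hjk hjk1)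
  intro k j
  have h1 : A k = A (k % p) := CPD_per hper k
  have h2 : A (k+1) = A (k % p + 1) := CPD_congr hper (Int.emod_add_emod k p 1).symm
  have h3 : A j = A (j % p) := CPD_per hper j
  have hkm0 : 0 ≤ k % p := Int.emod_nonneg k hpne
  have hkm1 : k % p < p := Int.emod_lt_of_pos k hppos
  have hjm0 : 0 ≤ j % p := Int.emod_nonneg j hpne
  have hjm1 : j % p < p := Int.emod_lt_of_pos j hppos
  rw [h1, h2, h3]
  exact bdd _ _ hkm0 (by omega) hjm0 (by omega)

include hp3 hper hH in
lemma CPD_strict : ∀ k j : ℤ, (j - k) % p ≠ 0 → (j - k - 1) % p ≠ 0 →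
    0 < det2 (A (k+1) - A k) (A j - A k) := by
  have hp3' : (3:ℤ) ≤ (p:ℤ) := by exact_mod_cast hp3
  have hppos : (0:ℤ) < (p:ℤ) := by omega
  have hpne : (p:ℤ) ≠ 0 := by omega
  have bdd : ∀ k j : ℤ, 0 ≤ k → k ≤ (p:ℤ)-1 → 0 ≤ j → j ≤ (p:ℤ)-1 →
      j ≠ k → j ≠ k + 1 → ¬(k = (p:ℤ)-1 ∧ j = 0) →
      0 < det2 (A (k+1) - A k) (A j - A k) := by
    intro k j hk0 hk1 hj0 hj1 hjk hjk1 hkp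
    rcases eq_or_ne j 0 with rfl | hj
    · exact CPD_T hp3 hper hH k (by omega) (by omega)
    · exact hH k j hk0 hk1 (by omega) hj1 hjk hjk1
  intro k j hc1 hc2
  have h1 : A k = A (k % p) := CPD_per hper k
  have h2 : A (k+1) = A (k % p + 1) := CPD_congr hper (Int.emod_add_emod k p 1).symm
  have h3 : A j = A (j % p) := CPD_per hper j
  have hkm0 : 0 ≤ k % p := Int.emod_nonneg k hpne
  have hkm1 : k % p < p := Int.emod_lt_of_pos k hppos
  have hjm0 : 0 ≤ j % p := Int.emod_nonneg j hpne
  have hjm1 : j % p < p := Int.emod_lt_of_pos j hppos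
  have e1 : j % p ≠ k % p := by
    intro h
    exact hc1 ((Int.emod_eq_emod_iff_emod_sub_eq_zero.mp h : (j - k) % (p:ℤ) = 0))
  have e2 : j % p ≠ k % p + 1 := by
    intro h
    rcases eq_or_lt_of_le (by omega : k % p + 1 ≤ (p:ℤ)) with he | hlt
    · omega
    · have hk1 : ((k:ℤ)+1) % p = k % p + 1 := by
        rw [← Int.emod_add_emod k p 1]
        exact Int.emod_eq_of_lt (by omega) hlt
      apply hc2
      have : (j - (k+1)) % p = 0 :=
        (Int.emod_eq_emod_iff_emod_sub_eq_zero.mp (by rw [hk1, h] : j % (p:ℤ) = (k+1) % (p:ℤ)))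
      rw [show (j - k - 1 : ℤ) = j - (k+1) by ring]
      exact this
  have e3 : ¬(k % p = (p:ℤ)-1 ∧ j % p = 0) := by
    rintro ⟨ha, hb⟩
    apply hc2
    have hdj : (p:ℤ) ∣ j := Int.dvd_of_emod_eq_zero hb
    have hdk : (p:ℤ) ∣ (k+1) := by
      apply Int.dvd_of_emod_eq_zero
      rw [← Int.emod_add_emod k p 1, ha, show ((p:ℤ)-1+1) = (p:ℤ) by ring, Int.emod_self]
    have : (p:ℤ) ∣ (j - k - 1) := by
      rw [show (j - k - 1 : ℤ) = j - (k+1) by ring]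
      exact dvd_sub hdj hdk
    exact Int.emod_eq_zero_of_dvd this
  rw [h1, h2, h3]
  exact bdd _ _ hkm0 (by omega) hjm0 (by omega) e1 e2 e3

include hp3 hper hH in
lemma CPD_tri : ∀ k : ℤ, 0 < det2 (A k - A (k-1)) (A (k+1) - A k) := by
  intro k
  have hp3' : (3:ℤ) ≤ (p:ℤ) := by exact_mod_cast hp3
  have c1 : ((k+1) - (k-1)) % (p:ℤ) ≠ 0 := by
    rw [show ((k+1:ℤ) - (k-1)) = 2 by ring, Int.emod_eq_of_lt (by norm_num) (by omega)]
    norm_num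
  have c2 : ((k+1) - (k-1) - 1) % (p:ℤ) ≠ 0 := by
    rw [show ((k+1:ℤ) - (k-1) - 1) = 1 by ring, Int.emod_eq_of_lt (by norm_num) (by omega)]
    norm_num
  have := CPD_strict hp3 hper hH (k-1) (k+1) c1 c2
  rw [show (k-1+1 : ℤ) = k by ring] at this
  calc (0:ℝ) < det2 (A k - A (k-1)) (A (k+1) - A (k-1)) := this
    _ = det2 (A k - A (k-1)) (A (k+1) - A k) := by
        rw [← det2_sub_self (A k - A (k-1)) (A (k+1) - A (k-1))]
        congr 1
        abel

include hp3 hper hH in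
lemma CPD_edge_ne (k : ℤ) : A (k+1) - A k ≠ 0 := by
  intro h
  have := CPD_tri hp3 hper hH (k+1)
  rw [show (k+1-1 : ℤ) = k by ring] at this
  rw [h, det2] at this
  simp at this

end CPD

/-- The polygonal line of a CPD with `p` vertices is the frontier of the convex
hull of its vertices, a bounded convex set with nonempty interior which is the
intersection of the `p` closed half-planes determined by its oriented edges. -/
theorem CPD_polyline_is_boundary (p : ℕ) (A : ℤ → ℝ × ℝ) (hA : IsCPD p A)
    (C : Set (ℝ × ℝ))
    (hC : C = convexHull ℝ (A '' {k : ℤ | 0 ≤ k ∧ k < (p : ℤ)})) :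
    Bornology.IsBounded C ∧ Convex ℝ C ∧ (interior C).Nonempty ∧
    frontier C = Polyline p A ∧
    C = ⋂ k ∈ Finset.range p,
      {M : ℝ × ℝ | 0 ≤ det2 (A (k + 1) - A k) (M - A k)} := by
  obtain ⟨hp3, hper, hH⟩ := hA
  have hp3' : (3:ℤ) ≤ (p:ℤ) := by exact_mod_cast hp3
  have hppos : (0:ℤ) < (p:ℤ) := by omega
  have hpne : (p:ℤ) ≠ 0 := by omega
  subst hC
  set S : Set (ℝ × ℝ) := A '' {k : ℤ | 0 ≤ k ∧ k < (p:ℤ)} with hSdef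
  have hSfin : S.Finite := by
    have he : {k : ℤ | 0 ≤ k ∧ k < (p:ℤ)} = Set.Ico (0:ℤ) (p:ℤ) := by
      ext x; simp [Set.mem_Ico]
    rw [hSdef, he]
    exact (Set.finite_Ico _ _).image _
  have hAmem : ∀ j : ℤ, A j ∈ S :=
    fun j => ⟨j % p, ⟨Int.emod_nonneg j hpne, Int.emod_lt_of_pos j hppos⟩,
      (CPD_per hper j).symm⟩
  have hConv : Convex ℝ (convexHull ℝ S) := convex_convexHull ℝ S
  have hAC : ∀ j : ℤ, A j ∈ convexHull ℝ S := fun j => subset_convexHull ℝ S (hAmem j)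
  -- the intersection of half-planes
  set K : Set (ℝ × ℝ) := ⋂ k ∈ Finset.range p,
      {M : ℝ × ℝ | 0 ≤ det2 (A (k + 1) - A k) (M - A k)} with hKdef
  have hKmem : ∀ M : ℝ × ℝ, M ∈ K ↔ ∀ k : ℤ, 0 ≤ det2 (A (k+1) - A k) (M - A k) := by
    intro M
    constructor
    · intro hM k
      have hk0 : 0 ≤ k % (p:ℤ) := Int.emod_nonneg k hpne
      have hk1 : k % (p:ℤ) < (p:ℤ) := Int.emod_lt_of_pos k hppos
      have hmem := Set.mem_iInter₂.mp hM (k % (p:ℤ)).toNat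
        (by rw [Finset.mem_range]; omega)
      have hcast : ((k % (p:ℤ)).toNat : ℤ) = k % (p:ℤ) := Int.toNat_of_nonneg hk0
      rw [Set.mem_setOf_eq, hcast] at hmem
      rwa [show A (k % (p:ℤ)) = A k from (CPD_per hper k).symm,
        show A (k % (p:ℤ) + 1) = A (k+1) from CPD_congr hper (Int.emod_add_emod k p 1)]
        at hmem
    · intro hM
      exact Set.mem_iInter₂.mpr fun k _ => hM (k : ℤ)
  classical
  have hCK : convexHull ℝ S = K := by
    apply le_antisymm
    · apply convexHull_min
      · rintro x ⟨j, -, rfl⟩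
        exact Set.mem_iInter₂.mpr fun k _ => CPD_weak hp3 hper hH (k:ℤ) j
      · apply convex_iInter₂
        intro k _
        intro x hx y hy a b ha hb hab
        simp only [Set.mem_setOf_eq] at *
        rw [det2_combo _ _ _ _ _ _ hab]
        exact add_nonneg (mul_nonneg ha hx) (mul_nonneg hb hy)
    · intro M hM
      have hMf : ∀ k : ℤ, 0 ≤ det2 (A (k+1) - A k) (M - A k) := (hKmem M).mp hM
      have hfan := CPD_fan hp3 hper hH
      set T : Finset ℤ := (Finset.Icc (2:ℤ) (p:ℤ)).filter
        (fun k => 0 ≤ det2 (A k - A 1) (M - A 1)) with hT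
      have h2T : (2:ℤ) ∈ T := by
        rw [hT, Finset.mem_filter, Finset.mem_Icc]
        refine ⟨⟨le_refl 2, by omega⟩, ?_⟩
        have h1 := hMf 1
        norm_num at h1
        exact h1
      have hTne : T.Nonempty := ⟨2, h2T⟩
      set k0 := T.max' hTne with hk0def
      have hk0T : k0 ∈ T := T.max'_mem hTne
      rw [hT, Finset.mem_filter, Finset.mem_Icc] at hk0T
      obtain ⟨⟨hk02, hk0p⟩, hk0m⟩ := hk0T
      rcases eq_or_lt_of_le hk0p with hk0eq | hk0lt
      · -- k0 = p : M lies on the segment [A 1, A p]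
        rw [hk0eq] at hk0m
        have hA0 : A (p:ℤ) = A 0 := CPD_congr hper (by simp)
        have hzero : det2 (A (p:ℤ) - A 1) (M - A 1) = 0 := by
          have h0 := hMf 0
          norm_num at h0
          rw [← hA0, det2_flip] at h0
          linarith
        have hne : A (p:ℤ) - A 1 ≠ 0 := by
          intro h
          have h2 := hfan 2 (p:ℤ) (le_refl 2) (by omega) (le_refl _)
          rw [h, det2_zero_right] at h2; exact lt_irrefl _ h2
        obtain ⟨t, ht⟩ := det2_zero_decomp hzero hne
        have ht0 : 0 ≤ t := by
          have h2 := hMf 1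
          norm_num at h2
          rw [ht, det2_smul_right] at h2
          nlinarith [hfan 2 (p:ℤ) (le_refl 2) (by omega) (le_refl _)]
        have ht1 : t ≤ 1 := by
          have h3 := hMf ((p:ℤ) - 1)
          rw [show ((p:ℤ)-1+1) = (p:ℤ) by ring] at h3
          have hrw : A (p:ℤ) - A ((p:ℤ)-1) = (A (p:ℤ) - A 1) - (A ((p:ℤ)-1) - A 1) :=
            (sub_sub_sub_cancel_right _ _ _).symm
          have hrw2 : M - A ((p:ℤ)-1) = t • (A (p:ℤ) - A 1) - (A ((p:ℤ)-1) - A 1) := by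
            rw [← ht]; abel
          rw [hrw, hrw2, det2_param] at h3
          nlinarith [hfan ((p:ℤ)-1) (p:ℤ) (by omega) (by omega) (le_refl _)]
        have hMeq : M = (1-t) • A 1 + t • A (p:ℤ) := by
          have h5 : M = A 1 + t • (A (p:ℤ) - A 1) := by rw [← ht]; abel
          rw [h5]; module
        rw [hMeq]
        exact hConv (hAC 1) (hAC (p:ℤ)) (by linarith) ht0 (by ring)
      · -- 2 ≤ k0 ≤ p - 1 : M in the triangle (A 1, A k0, A (k0+1))
        have hnext : det2 (A (k0+1) - A 1) (M - A 1) < 0 := by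
          by_contra hc
          push_neg at hc
          have hmem : k0 + 1 ∈ T := by
            rw [hT, Finset.mem_filter, Finset.mem_Icc]
            exact ⟨⟨by omega, by omega⟩, hc⟩
          have hle := T.le_max' (k0+1) hmem
          rw [← hk0def] at hle
          omega
        have hD : 0 < det2 (A k0 - A 1) (A (k0+1) - A 1) :=
          hfan k0 (k0+1) hk02 (by omega) (by omega)
        have hbary := det2_bary (u := A k0 - A 1) (v := A (k0+1) - A 1) (M - A 1)
          (ne_of_gt hD)
        set lam := det2 (M - A 1) (A (k0+1) - A 1) / det2 (A k0 - A 1) (A (k0+1) - A 1)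
          with hlamdef
        set mu := det2 (A k0 - A 1) (M - A 1) / det2 (A k0 - A 1) (A (k0+1) - A 1)
          with hmudef
        have hlam0 : 0 < lam := by
          apply div_pos _ hD
          rw [det2_antisymm]
          linarith
        have hmu0 : 0 ≤ mu := div_nonneg hk0m hD.le
        have hsum : lam + mu ≤ 1 := by
          have h4 := hMf k0
          have hrw : A (k0+1) - A k0 = (A (k0+1) - A 1) - (A k0 - A 1) :=
            (sub_sub_sub_cancel_right _ _ _).symm
          have hrw2 : M - A k0 = (M - A 1) - (A k0 - A 1) :=
            (sub_sub_sub_cancel_right _ _ _).symm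
          rw [hrw, hrw2, det2_shift] at h4
          rw [hlamdef, hmudef, ← add_div, div_le_one hD]
          have h6 := det2_antisymm (M - A 1) (A (k0+1) - A 1)
          linarith
        have hs : 0 < lam + mu := by linarith
        have hN : (lam/(lam+mu)) • A k0 + (mu/(lam+mu)) • A (k0+1) ∈ convexHull ℝ S :=
          hConv (hAC k0) (hAC (k0+1)) (div_nonneg hlam0.le hs.le)
            (div_nonneg hmu0 hs.le) (by field_simp)
        have h6 : M = (1-lam-mu) • A 1 + lam • A k0 + mu • A (k0+1) := by
          have h7 : M = lam • (A k0 - A 1) + mu • (A (k0+1) - A 1) + A 1 := by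
            rw [← hbary]; abel
          rw [h7]; module
        have hMeq : M = (1 - (lam+mu)) • A 1 +
            (lam+mu) • ((lam/(lam+mu)) • A k0 + (mu/(lam+mu)) • A (k0+1)) := by
          rw [h6, smul_add, smul_smul, smul_smul,
            mul_div_cancel₀ _ (ne_of_gt hs), mul_div_cancel₀ _ (ne_of_gt hs)]
          module
        rw [hMeq]
        exact hConv (hAC 1) hN (by linarith) hs.le (by ring)
  have hne : ∀ c : ℤ, 1 - (p:ℤ) ≤ c → c ≤ -1 → c % (p:ℤ) ≠ 0 := by
    intro c h1 h2
    rw [show c = (c + p) + (p:ℤ) * (-1) by ring, Int.add_mul_emod_self_left,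
      Int.emod_eq_of_lt (by omega) (by omega)]
    omega
  have hne2 : ∀ c : ℤ, 1 ≤ c → c ≤ (p:ℤ)-1 → c % (p:ℤ) ≠ 0 := by
    intro c h1 h2
    rw [Int.emod_eq_of_lt (by omega) (by omega)]
    omega
  set O : Set (ℝ × ℝ) := ⋂ k ∈ Finset.range p,
    {M : ℝ × ℝ | 0 < det2 (A (k + 1) - A k) (M - A k)} with hOdef
  have hOopen : IsOpen O := by
    apply isOpen_biInter_finset
    intro k _
    have hcont : Continuous fun M : ℝ × ℝ => det2 (A ((k:ℤ) + 1) - A k) (M - A k) := by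
      simp only [det2, Prod.fst_sub, Prod.snd_sub]
      fun_prop
    exact isOpen_lt continuous_const hcont
  have hOsub : O ⊆ convexHull ℝ S := by
    rw [hCK]
    intro x hx
    apply Set.mem_iInter₂.mpr
    intro k hk
    have := Set.mem_iInter₂.mp hx k hk
    simp only [Set.mem_setOf_eq] at this ⊢
    exact le_of_lt this
  have hIntNe : (interior (convexHull ℝ S)).Nonempty := by
    set G : ℝ × ℝ := (3:ℝ)⁻¹ • (A 0 + A 1 + A 2) with hGdef
    have hGO : G ∈ O := by
      apply Set.mem_iInter₂.mpr
      intro k hk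
      rw [Finset.mem_range] at hk
      have hk' : (k:ℤ) ≤ (p:ℤ) - 1 := by omega
      have hk0 : (0:ℤ) ≤ (k:ℤ) := by positivity
      simp only [Set.mem_setOf_eq, hGdef]
      rw [det2_centroid]
      have w0 := CPD_weak hp3 hper hH (k:ℤ) 0
      have w1 := CPD_weak hp3 hper hH (k:ℤ) 1
      have w2 := CPD_weak hp3 hper hH (k:ℤ) 2
      have hstrict : 0 < det2 (A ((k:ℤ)+1) - A k) (A 0 - A k) ∨
          0 < det2 (A ((k:ℤ)+1) - A k) (A 1 - A k) ∨
          0 < det2 (A ((k:ℤ)+1) - A k) (A 2 - A k) := by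
        rcases eq_or_ne (k:ℤ) 0 with h0 | h0
        · exact Or.inr (Or.inr (CPD_strict hp3 hper hH _ _
            (hne2 _ (by omega) (by omega)) (hne2 _ (by omega) (by omega))))
        rcases eq_or_ne (k:ℤ) 1 with h1 | h1
        · exact Or.inl (CPD_strict hp3 hper hH _ _
            (hne _ (by omega) (by omega)) (hne _ (by omega) (by omega)))
        rcases eq_or_ne (k:ℤ) ((p:ℤ)-1) with h2 | h2
        · exact Or.inr (Or.inl (CPD_strict hp3 hper hH _ _
            (hne _ (by omega) (by omega)) (hne _ (by omega) (by omega))))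
        · exact Or.inl (CPD_strict hp3 hper hH _ _
            (hne _ (by omega) (by omega)) (hne _ (by omega) (by omega)))
      rcases hstrict with h | h | h <;> nlinarith [w0, w1, w2]
    exact ⟨G, interior_maximal hOsub hOopen hGO⟩
  have hFront : frontier (convexHull ℝ S) = Polyline p A := by
    have hClosed : IsClosed (convexHull ℝ S) := (hSfin.isCompact_convexHull ℝ).isClosed
    have hIntO : interior (convexHull ℝ S) = O := by
      apply le_antisymm
      · intro M hMint
        have hMC : M ∈ convexHull ℝ S := interior_subset hMint
        have hMf : ∀ j : ℤ, 0 ≤ det2 (A (j+1) - A j) (M - A j) :=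
          (hKmem M).mp (hCK ▸ hMC)
        apply Set.mem_iInter₂.mpr
        intro k hk
        simp only [Set.mem_setOf_eq]
        by_contra hle
        push_neg at hle
        have hfk : det2 (A ((k:ℤ)+1) - A k) (M - A k) = 0 := le_antisymm hle (hMf k)
        have hene : A ((k:ℤ)+1) - A (k:ℤ) ≠ 0 := CPD_edge_ne hp3 hper hH k
        set w : ℝ × ℝ := ((A ((k:ℤ)+1) - A (k:ℤ)).2, -(A ((k:ℤ)+1) - A (k:ℤ)).1)
          with hwdef
        have hdetw : det2 (A ((k:ℤ)+1) - A (k:ℤ)) w < 0 := by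
          have h1 : (A ((k:ℤ)+1) - A (k:ℤ)).1 ≠ 0 ∨ (A ((k:ℤ)+1) - A (k:ℤ)).2 ≠ 0 := by
            by_contra hcc
            push_neg at hcc
            exact hene (Prod.ext hcc.1 hcc.2)
          simp only [hwdef, det2]
          rcases h1 with h | h
          · nlinarith [mul_self_pos.mpr h,
              mul_self_nonneg (A ((k:ℤ)+1) - A (k:ℤ)).2]
          · nlinarith [mul_self_pos.mpr h,
              mul_self_nonneg (A ((k:ℤ)+1) - A (k:ℤ)).1]
        obtain ⟨ε, hε, hball⟩ := Metric.mem_nhds_iff.mp (mem_interior_iff_mem_nhds.mp hMint)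
        set δ := ε / (2 * (‖w‖ + 1)) with hddef
        have hwnn : (0:ℝ) ≤ ‖w‖ := norm_nonneg w
        have hd : 0 < δ := by rw [hddef]; positivity
        have hdw : δ * (‖w‖ + 1) = ε / 2 := by rw [hddef]; field_simp
        have hM' : M + δ • w ∈ Metric.ball M ε := by
          rw [Metric.mem_ball, dist_eq_norm, add_sub_cancel_left, norm_smul,
            Real.norm_eq_abs, abs_of_pos hd]
          nlinarith [hd, hwnn, hε]
        have hM'C : M + δ • w ∈ convexHull ℝ S := hball hM'
        have hM'f : 0 ≤ det2 (A ((k:ℤ)+1) - A k) (M + δ • w - A k) :=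
          (hKmem _).mp (hCK ▸ hM'C) k
        rw [show M + δ • w - A (k:ℤ) = (M - A (k:ℤ)) + δ • w by abel, det2_add_smul,
          hfk, zero_add] at hM'f
        nlinarith [hdetw, hd, hM'f]
      · exact interior_maximal hOsub hOopen
    rw [hClosed.frontier_eq, hIntO]
    apply Set.Subset.antisymm
    · rintro M ⟨hMC, hMO⟩
      have hMf : ∀ j : ℤ, 0 ≤ det2 (A (j+1) - A j) (M - A j) :=
        (hKmem M).mp (hCK ▸ hMC)
      rw [hOdef] at hMO
      simp only [Set.mem_iInter, Set.mem_setOf_eq, not_forall] at hMO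
      obtain ⟨k, hk, hknot⟩ := hMO
      push_neg at hknot
      have hfk : det2 (A ((k:ℤ)+1) - A k) (M - A k) = 0 := le_antisymm hknot (hMf k)
      have hene := CPD_edge_ne hp3 hper hH (k:ℤ)
      obtain ⟨t, ht⟩ := det2_zero_decomp hfk hene
      have htri1 := CPD_tri hp3 hper hH (k:ℤ)
      have htri2 := CPD_tri hp3 hper hH ((k:ℤ)+1)
      rw [show ((k:ℤ)+1-1) = (k:ℤ) by ring, show ((k:ℤ)+1+1) = (k:ℤ)+2 by ring] at htri2
      have ht0 : 0 ≤ t := by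
        have h1 := hMf ((k:ℤ)-1)
        rw [show ((k:ℤ)-1+1) = (k:ℤ) by ring] at h1
        rw [show M - A ((k:ℤ)-1) = (A (k:ℤ) - A ((k:ℤ)-1)) + t • (A ((k:ℤ)+1) - A (k:ℤ))
            by rw [← ht]; abel, det2_self_add_smul] at h1
        nlinarith [htri1]
      have ht1 : t ≤ 1 := by
        have h2 := hMf ((k:ℤ)+1)
        rw [show ((k:ℤ)+1+1) = (k:ℤ)+2 by ring] at h2
        rw [show M - A ((k:ℤ)+1) = (t-1) • (A ((k:ℤ)+1) - A (k:ℤ)) by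
            rw [sub_smul, one_smul, ← ht]; abel, det2_smul_right] at h2
        have hneg : det2 (A ((k:ℤ)+2) - A ((k:ℤ)+1)) (A ((k:ℤ)+1) - A (k:ℤ)) < 0 := by
          rw [det2_antisymm]; linarith [htri2]
        nlinarith
      unfold Polyline
      apply Set.mem_iUnion₂.mpr
      refine ⟨k, hk, 1-t, t, by linarith, ht0, by ring, ?_⟩
      have hMeq : M = A (k:ℤ) + t • (A ((k:ℤ)+1) - A (k:ℤ)) := by rw [← ht]; abel
      rw [hMeq]; module
    · intro x hx
      unfold Polyline at hx
      obtain ⟨k, hk, hseg⟩ := Set.mem_iUnion₂.mp hx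
      obtain ⟨a, b, ha, hb, hab, hxeq⟩ := hseg
      constructor
      · exact hConv.segment_subset (hAC k) (hAC ((k:ℤ)+1)) ⟨a, b, ha, hb, hab, hxeq⟩
      · intro hxO
        have h1 := Set.mem_iInter₂.mp hxO k hk
        simp only [Set.mem_setOf_eq] at h1
        rw [← hxeq, det2_combo _ _ _ _ _ _ hab, sub_self, det2_zero_right,
          det2_self] at h1
        simp at h1
  exact ⟨(hSfin.isCompact_convexHull ℝ).isBounded, hConv, hIntNe, hFront, hCK⟩
end
end
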